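/- arXiv:2310.08563 — 3 statements merged into one kernel-verified Lean document; each statement's English description precedes it below -/
import Mathlib

section
/- Let S be a finite set with n elements and let r be a positive integer with n ≥ r. Then the r-partition graph G[S,r] is connected. -/
open Finset

/-- The parts of a partition after removing the point `x`, discarding empty parts. -/
def eraseParts {α : Type*} [DecidableEq α] (parts : Finset (Finset α)) (x : α) :
    Finset (Finset α) :=
  (parts.image fun t => t.erase x).filter fun t => t.Nonempty

/-- The `r`-partition graph of a finite set `S`: vertices are the partitions of `S`
into exactly `r` nonempty parts, and two partitions are adjacent iff their partition
distance is `1`, i.e. there is exactly one element `x ∈ S` whose removal makes the two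
partitions agree on `S \ {x}`. -/
def partitionGraph {α : Type*} [DecidableEq α] (S : Finset α) (r : ℕ) :
    SimpleGraph {P : Finpartition S // P.parts.card = r} where
  Adj P Q := P ≠ Q ∧ ∃! x, x ∈ S ∧ eraseParts P.1.parts x = eraseParts Q.1.parts x
  symm := by
    constructor
    rintro P Q ⟨hne, x, ⟨hx1, hx2⟩, hu⟩
    exact ⟨hne.symm, x, ⟨hx1, hx2.symm⟩, fun y hy => hu y ⟨hy.1, hy.2.symm⟩⟩
  loopless := by constructor; rintro P ⟨h, -⟩; exact h rfl

set_option linter.unusedSectionVars false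

section Aux
variable {α : Type*} [DecidableEq α] {S : Finset α}


section Move

variable (P : Finpartition S) {x : α} {u : Finset α}
  (hx : x ∈ S) (hu : u ∈ P.parts) (hut : u ≠ P.part x)
  (ht2 : ((P.part x).erase x).Nonempty)

/-- The parts after moving `x` from its part into part `u`. -/
def moveParts (P : Finpartition S) (x : α) (u : Finset α) : Finset (Finset α) :=
  insert (insert x u) (insert ((P.part x).erase x) ((P.parts.erase (P.part x)).erase u))

include hx hu hut in
lemma x_not_mem_u : x ∉ u := fun hxu =>
  hut (P.eq_of_mem_parts hu (P.part_mem.2 hx) hxu (P.mem_part hx))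

include hx hu hut in
lemma disj_u_part : Disjoint u (P.part x) :=
  P.disjoint hu (P.part_mem.2 hx) hut

include hx in
lemma mem_rest_facts {W : Finset α} (hW : W ∈ (P.parts.erase (P.part x)).erase u) :
    W ∈ P.parts ∧ W ≠ P.part x ∧ W ≠ u := by
  simp only [mem_erase] at hW
  exact ⟨hW.2.2, hW.2.1, hW.1⟩

include hx hu hut in
lemma moveParts_pairwiseDisjoint :
    (↑(moveParts P x u) : Set (Finset α)).PairwiseDisjoint id := by
  have hxu := x_not_mem_u P hx hu hut
  have hdu := disj_u_part P hx hu hut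
  intro A hA B hB hAB
  simp only [moveParts, coe_insert, Set.mem_insert_iff, mem_coe] at hA hB
  have key : ∀ C ∈ (P.parts.erase (P.part x)).erase u, Disjoint (insert x u) C := by
    intro C hC
    obtain ⟨hCp, hCt, hCu⟩ := mem_rest_facts P hx hC
    rw [disjoint_insert_left]
    constructor
    · intro hxC
      exact hCt (P.eq_of_mem_parts hCp (P.part_mem.2 hx) hxC (P.mem_part hx))
    · exact P.disjoint hu hCp hCu.symm
  have key2 : ∀ C ∈ (P.parts.erase (P.part x)).erase u, Disjoint ((P.part x).erase x) C := by
    intro C hC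
    obtain ⟨hCp, hCt, hCu⟩ := mem_rest_facts P hx hC
    exact (P.disjoint (P.part_mem.2 hx) hCp (Ne.symm hCt)).mono_left (erase_subset _ _)
  have key3 : Disjoint (insert x u) ((P.part x).erase x) := by
    rw [disjoint_insert_left]
    exact ⟨notMem_erase _ _, hdu.mono_right (erase_subset _ _)⟩
  rcases hA with rfl | rfl | hA <;> rcases hB with rfl | rfl | hB
  · exact absurd rfl hAB
  · exact key3
  · exact key B hB
  · exact key3.symm
  · exact absurd rfl hAB
  · exact key2 B hB
  · exact (key A hA).symm
  · exact (key2 A hA).symm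
  · exact P.disjoint (mem_rest_facts P hx hA).1 (mem_rest_facts P hx hB).1 hAB

include hx hu hut in
lemma moveParts_sup : (moveParts P x u).sup id = S := by
  have h1 : P.parts = insert (P.part x) (insert u ((P.parts.erase (P.part x)).erase u)) := by
    rw [insert_erase, insert_erase (P.part_mem.2 hx)]
    rw [mem_erase]
    exact ⟨hut, hu⟩
  have := P.sup_parts
  rw [h1] at this
  rw [moveParts]
  simp only [sup_insert, sup_eq_union, id] at this ⊢
  conv_rhs => rw [← this]
  ext a
  simp only [mem_union, mem_insert, mem_erase]
  constructor
  · rintro ((rfl | ha) | (⟨-, ha⟩ | ha))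
    · exact Or.inl (P.mem_part hx)
    · exact Or.inr (Or.inl ha)
    · exact Or.inl ha
    · exact Or.inr (Or.inr ha)
  · rintro (ha | ha | ha)
    · by_cases hax : a = x
      · exact Or.inl (Or.inl hax)
      · exact Or.inr (Or.inl ⟨hax, ha⟩)
    · exact Or.inl (Or.inr ha)
    · exact Or.inr (Or.inr ha)

include hx hu hut ht2 in
lemma moveParts_not_bot : ⊥ ∉ moveParts P x u := by
  simp only [moveParts, mem_insert, bot_eq_empty]
  push_neg
  refine ⟨?_, ?_, ?_⟩
  · exact fun h => by simp [eq_comm (a := (∅ : Finset α))] at h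
  · exact fun h => by rw [← h] at ht2; exact not_nonempty_empty ht2
  · intro h
    exact P.bot_notMem ((mem_rest_facts P hx h).1)

/-- The partition obtained from `P` by moving `x` into the part `u`. -/
def move : Finpartition S where
  parts := moveParts P x u
  supIndep := (supIndep_iff_pairwiseDisjoint).2 (moveParts_pairwiseDisjoint P hx hu hut)
  sup_parts := moveParts_sup P hx hu hut
  bot_notMem := moveParts_not_bot P hx hu hut ht2

include hx hu hut ht2 in
lemma insert_not_mem_rest : insert x u ∉ (P.parts.erase (P.part x)).erase u := by
  intro h
  obtain ⟨hp, hne, -⟩ := mem_rest_facts P hx h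
  exact hne (P.eq_of_mem_parts hp (P.part_mem.2 hx) (mem_insert_self x u) (P.mem_part hx))

include hx hu hut ht2 in
lemma erase_not_mem_rest : (P.part x).erase x ∉ (P.parts.erase (P.part x)).erase u := by
  intro h
  obtain ⟨hp, hne, -⟩ := mem_rest_facts P hx h
  obtain ⟨z, hz⟩ := ht2
  exact hne (P.eq_of_mem_parts hp (P.part_mem.2 hx) hz (mem_of_mem_erase hz))

include hx hu hut ht2 in
lemma move_card : (moveParts P x u).card = P.parts.card := by
  have h1 : insert x u ∉ insert ((P.part x).erase x) ((P.parts.erase (P.part x)).erase u) := by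
    simp only [mem_insert]
    push_neg
    refine ⟨?_, insert_not_mem_rest P hx hu hut ht2⟩
    intro h
    have : x ∈ (P.part x).erase x := h ▸ mem_insert_self x u
    exact notMem_erase x _ this
  rw [moveParts, card_insert_of_notMem h1,
    card_insert_of_notMem (erase_not_mem_rest P hx hu hut ht2),
    card_erase_of_mem, card_erase_of_mem (P.part_mem.2 hx)]
  · have h2 : 2 ≤ P.parts.card := by
      have : {u, P.part x} ⊆ P.parts := by
        intro a ha
        rcases mem_insert.1 ha with rfl | ha
        · exact hu
        · rw [mem_singleton.1 ha]; exact P.part_mem.2 hx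
      calc 2 = ({u, P.part x} : Finset (Finset α)).card := by
              rw [card_insert_of_notMem (by simpa using hut), card_singleton]
           _ ≤ P.parts.card := card_le_card this
    omega
  · rw [mem_erase]; exact ⟨hut, hu⟩

lemma mem_eraseParts {parts : Finset (Finset α)} {x : α} {A : Finset α} :
    A ∈ eraseParts parts x ↔ A.Nonempty ∧ ∃ W ∈ parts, W.erase x = A := by
  simp only [eraseParts, mem_filter, mem_image]
  tauto

include hx ht2 in
lemma eraseParts_eq :
    eraseParts P.parts x = insert ((P.part x).erase x) (P.parts.erase (P.part x)) := by
  ext A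
  rw [mem_eraseParts]
  simp only [mem_insert, mem_erase]
  constructor
  · rintro ⟨hA, W, hW, rfl⟩
    by_cases hWt : W = P.part x
    · exact Or.inl (by rw [hWt])
    · have hxW : x ∉ W := fun hxW =>
        hWt (P.eq_of_mem_parts hW (P.part_mem.2 hx) hxW (P.mem_part hx))
      rw [erase_eq_of_notMem hxW]
      exact Or.inr ⟨hWt, hW⟩
  · rintro (rfl | ⟨hne, hA⟩)
    · exact ⟨ht2, P.part x, P.part_mem.2 hx, rfl⟩
    · have hxA : x ∉ A := fun hxA =>
        hne (P.eq_of_mem_parts hA (P.part_mem.2 hx) hxA (P.mem_part hx))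
      exact ⟨P.nonempty_of_mem_parts hA, A, hA, erase_eq_of_notMem hxA⟩

include hx hu hut ht2 in
lemma eraseParts_move_eq :
    eraseParts (moveParts P x u) x = insert ((P.part x).erase x) (P.parts.erase (P.part x)) := by
  have hxu := x_not_mem_u P hx hu hut
  have hdu := disj_u_part P hx hu hut
  ext A
  rw [mem_eraseParts]
  simp only [moveParts, mem_insert, mem_erase]
  constructor
  · rintro ⟨hA, W, hW, rfl⟩
    rcases hW with rfl | rfl | hW
    · rw [erase_insert hxu]
      exact Or.inr ⟨hut, hu⟩
    · rw [erase_idem]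
      exact Or.inl rfl
    · obtain ⟨hnu, hne, hp⟩ := hW
      have hxW : x ∉ W := fun hxW =>
        hne (P.eq_of_mem_parts hp (P.part_mem.2 hx) hxW (P.mem_part hx))
      rw [erase_eq_of_notMem hxW]
      exact Or.inr ⟨hne, hp⟩
  · rintro (rfl | ⟨hne, hA⟩)
    · exact ⟨ht2, (P.part x).erase x, Or.inr (Or.inl rfl), erase_idem⟩
    · have hxA : x ∉ A := fun hxA =>
        hne (P.eq_of_mem_parts hA (P.part_mem.2 hx) hxA (P.mem_part hx))
      by_cases hAu : A = u
      · exact ⟨P.nonempty_of_mem_parts hA, insert x u, Or.inl rfl,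
          by rw [erase_insert hxu, hAu]⟩
      · exact ⟨P.nonempty_of_mem_parts hA, A, Or.inr (Or.inr ⟨hAu, hne, hA⟩),
          erase_eq_of_notMem hxA⟩

include hx hu hut ht2 in
lemma eraseParts_move_ne {y : α} (hy : y ≠ x) :
    eraseParts P.parts y ≠ eraseParts (moveParts P x u) y := by
  have hxu := x_not_mem_u P hx hu hut
  have hdu := disj_u_part P hx hu hut
  by_cases hyu : y ∈ u
  · -- use the part `(P.part x).erase x`
    obtain ⟨z, hz⟩ := id ht2
    have hyt : y ∉ P.part x := fun h => disjoint_left.1 hdu hyu h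
    intro heq
    have hmem : (P.part x).erase x ∈ eraseParts (moveParts P x u) y := by
      rw [mem_eraseParts]
      exact ⟨ht2, (P.part x).erase x, by simp [moveParts],
        erase_eq_of_notMem fun h => hyt (mem_of_mem_erase h)⟩
    rw [← heq, mem_eraseParts] at hmem
    obtain ⟨-, V, hV, hVe⟩ := hmem
    have hzV : z ∈ V := mem_of_mem_erase (hVe ▸ hz)
    have hVt : V = P.part x := P.eq_of_mem_parts hV (P.part_mem.2 hx) hzV (mem_of_mem_erase hz)
    rw [hVt] at hVe
    have : x ∈ (P.part x).erase y := mem_erase.2 ⟨fun h => hy h.symm, P.mem_part hx⟩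
    rw [hVe] at this
    exact notMem_erase x _ this
  · -- use the part `insert x u`
    obtain ⟨w, hw⟩ := P.nonempty_of_mem_parts hu
    intro heq
    have hmem : insert x u ∈ eraseParts (moveParts P x u) y := by
      rw [mem_eraseParts]
      refine ⟨insert_nonempty _ _, insert x u, by simp [moveParts], ?_⟩
      apply erase_eq_of_notMem
      simp only [mem_insert]
      rintro (rfl | h)
      · exact hy rfl
      · exact hyu h
    rw [← heq, mem_eraseParts] at hmem
    obtain ⟨-, V, hV, hVe⟩ := hmem
    have hxV : x ∈ V := mem_of_mem_erase (hVe ▸ mem_insert_self x u)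
    have hVt : V = P.part x := P.eq_of_mem_parts hV (P.part_mem.2 hx) hxV (P.mem_part hx)
    rw [hVt] at hVe
    have hwV : w ∈ (P.part x).erase y := hVe ▸ mem_insert_of_mem hw
    exact disjoint_left.1 hdu hw (mem_of_mem_erase hwV)

include hx hu hut ht2 in
lemma move_parts_ne : P.parts ≠ moveParts P x u := by
  have hxu := x_not_mem_u P hx hu hut
  have hdu := disj_u_part P hx hu hut
  obtain ⟨w, hw⟩ := P.nonempty_of_mem_parts hu
  intro heq
  have : u ∈ moveParts P x u := heq ▸ hu
  simp only [moveParts, mem_insert, mem_erase] at this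
  rcases this with h | h | h
  · exact hxu (h ▸ mem_insert_self x u)
  · exact disjoint_left.1 hdu hw (mem_of_mem_erase (h ▸ hw))
  · exact h.1 rfl

end Move


lemma move_adj {r : ℕ} (P : Finpartition S) {x : α} {u : Finset α}
    (hx : x ∈ S) (hu : u ∈ P.parts) (hut : u ≠ P.part x)
    (ht2 : ((P.part x).erase x).Nonempty) (hc : P.parts.card = r) :
    (partitionGraph S r).Adj ⟨P, hc⟩
      ⟨move P hx hu hut ht2, by rw [show (move P hx hu hut ht2).parts = moveParts P x u from rfl,
        move_card P hx hu hut ht2, hc]⟩ := by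
  constructor
  · intro h
    exact move_parts_ne P hx hu hut ht2 (congrArg (fun z => z.1.parts) h)
  · refine ⟨x, ⟨hx, ?_⟩, ?_⟩
    · rw [show (move P hx hu hut ht2).parts = moveParts P x u from rfl,
        eraseParts_eq P hx ht2, eraseParts_move_eq P hx hu hut ht2]
    · rintro y ⟨hyS, hye⟩
      by_contra hyx
      exact eraseParts_move_ne P hx hu hut ht2 hyx hye

section Canonical

variable {T : Finset α} (hTS : T ⊆ S) (hRne : (S \ T).Nonempty)

/-- The canonical partition: singletons on `T` plus the big part `S \ T`. -/
def canonParts (S T : Finset α) : Finset (Finset α) :=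
  insert (S \ T) (T.image fun a => ({a} : Finset α))

include hTS hRne in
lemma canon_finpartition : ∃ C : Finpartition S, C.parts = canonParts S T := by
  refine ⟨⟨canonParts S T, ?_, ?_, ?_⟩, rfl⟩
  · rw [supIndep_iff_pairwiseDisjoint]
    intro A hA B hB hAB
    simp only [canonParts, coe_insert, Set.mem_insert_iff, mem_coe, coe_image,
      Set.mem_image, mem_coe] at hA hB
    have key : ∀ a ∈ T, Disjoint (S \ T) ({a} : Finset α) := by
      intro a ha
      simp [disjoint_singleton_right, ha]
    rcases hA with rfl | ⟨a, ha, rfl⟩ <;> rcases hB with rfl | ⟨c, hc, rfl⟩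
    · exact absurd rfl hAB
    · exact key c hc
    · exact (key a ha).symm
    · have : a ≠ c := fun h => hAB (by rw [h])
      simpa [Function.onFun, disjoint_singleton] using this
  · simp only [canonParts, sup_insert, sup_image, id, sup_eq_union]
    have : T.sup singleton = T := by
      ext a; simp [mem_sup]
    rw [show (id ∘ (fun a => ({a} : Finset α))) = singleton from rfl, this,
      sdiff_union_of_subset hTS]
  · simp only [canonParts, bot_eq_empty, mem_insert, mem_image]
    push_neg
    refine ⟨fun h => by rw [← h] at hRne; exact not_nonempty_empty hRne, ?_⟩
    intro a ha
    exact singleton_nonempty a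

include hTS hRne in
lemma canonParts_card : (canonParts S T).card = T.card + 1 := by
  rw [canonParts, card_insert_of_notMem, card_image_of_injective _ singleton_injective]
  intro h
  obtain ⟨a, ha, h⟩ := mem_image.1 h
  obtain ⟨y, hy⟩ := id hRne
  have hy2 := hy
  rw [← h, mem_singleton] at hy2
  subst hy2
  exact (mem_sdiff.1 hy).2 ha

end Canonical

section Main

/-- Adjacency as a relation on finpartitions. -/
def adjP (P Q : Finpartition S) : Prop :=
  P ≠ Q ∧ ∃! x, x ∈ S ∧ eraseParts P.parts x = eraseParts Q.parts x

lemma adjP_adj {r : ℕ} {P Q : Finpartition S} (h : adjP P Q)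
    (hc : P.parts.card = r) (hc' : Q.parts.card = r) :
    (partitionGraph S r).Adj ⟨P, hc⟩ ⟨Q, hc'⟩ :=
  ⟨fun he => h.1 (congrArg Subtype.val he), h.2⟩

lemma move_adjP (P : Finpartition S) {x : α} {u : Finset α}
    (hx : x ∈ S) (hu : u ∈ P.parts) (hut : u ≠ P.part x)
    (ht2 : ((P.part x).erase x).Nonempty) :
    adjP P (move P hx hu hut ht2) := by
  constructor
  · intro h
    exact move_parts_ne P hx hu hut ht2 (congrArg Finpartition.parts h)
  · refine ⟨x, ⟨hx, ?_⟩, ?_⟩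
    · rw [show (move P hx hu hut ht2).parts = moveParts P x u from rfl,
        eraseParts_eq P hx ht2, eraseParts_move_eq P hx hu hut ht2]
    · rintro y ⟨hyS, hye⟩
      by_contra hyx
      exact eraseParts_move_ne P hx hu hut ht2 hyx hye

/-- The potential function. -/
def phi (n : ℕ) (T : Finset α) (b : α) (P : Finpartition S) : ℕ :=
  2 * n * (T.filter fun a => ({a} : Finset α) ∉ P.parts).card +
    ∑ W ∈ P.parts.filter fun W => b ∉ W, (W.card - 1)

lemma parts_eq_insert (P : Finpartition S) {t u : Finset α} (ht : t ∈ P.parts)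
    (hu : u ∈ P.parts) (hut : u ≠ t) :
    P.parts = insert t (insert u ((P.parts.erase t).erase u)) := by
  rw [insert_erase, insert_erase ht]
  rw [mem_erase]
  exact ⟨hut, hu⟩

lemma stepA {n : ℕ} {T : Finset α} {b : α} (hbS : b ∈ S) (hbT : b ∉ T)
    (P : Finpartition S) {W : Finset α} (hW : W ∈ P.parts) (hbW : b ∉ W)
    (hW2 : 2 ≤ W.card) {y : α} (hy : y ∈ W) :
    ∃ Q : Finpartition S, Q.parts.card = P.parts.card ∧ adjP P Q ∧
      phi n T b Q < phi n T b P := by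
  have hyS : y ∈ S := P.le hW hy
  have htW : P.part y = W := P.part_eq_of_mem hW hy
  have hu : P.part b ∈ P.parts := P.part_mem.2 hbS
  have hut : P.part b ≠ P.part y := by
    rw [htW]; intro h; exact hbW (h ▸ P.mem_part hbS)
  have ht2 : ((P.part y).erase y).Nonempty := by
    rw [← card_pos, card_erase_of_mem (htW ▸ hy), htW]; omega
  refine ⟨move P hyS hu hut ht2, move_card P hyS hu hut ht2,
    move_adjP P hyS hu hut ht2, ?_⟩
  have hQparts : (move P hyS hu hut ht2).parts
      = insert (insert y (P.part b)) (insert (W.erase y)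
        ((P.parts.erase W).erase (P.part b))) := by
    rw [show (move P hyS hu hut ht2).parts = moveParts P y (P.part b) from rfl, moveParts, htW]
  set rest := (P.parts.erase W).erase (P.part b) with hrest
  have hrest_mem : ∀ V ∈ rest, V ∈ P.parts ∧ V ≠ W ∧ V ≠ P.part b := by
    intro V hV
    simp only [hrest, mem_erase] at hV
    exact ⟨hV.2.2, hV.2.1, hV.1⟩
  have hrest_b : ∀ V ∈ rest, b ∉ V := by
    intro V hV hbV
    obtain ⟨hVp, -, hVb⟩ := hrest_mem V hV
    exact hVb (P.eq_of_mem_parts hVp (P.part_mem.2 hbS) hbV (P.mem_part hbS))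
  have hPparts : P.parts = insert W (insert (P.part b) rest) :=
    parts_eq_insert P hW hu (htW ▸ hut)
  -- second component for P
  have hfiltP : P.parts.filter (fun V => b ∉ V) = insert W rest := by
    rw [hPparts]
    rw [filter_insert, filter_insert, if_pos hbW, if_neg (by simp [P.mem_part hbS]),
      filter_eq_self.2 hrest_b]
  have hfiltQ : (move P hyS hu hut ht2).parts.filter (fun V => b ∉ V)
      = insert (W.erase y) rest := by
    rw [hQparts, filter_insert, filter_insert,
      if_neg (by simp [mem_insert, P.mem_part hbS]),
      if_pos (fun h => hbW (mem_of_mem_erase h)), filter_eq_self.2 hrest_b]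
  have hWrest : W ∉ rest := fun h => (hrest_mem W h).2.1 rfl
  have hWyrest : W.erase y ∉ rest := by
    rw [hrest, ← htW]
    exact erase_not_mem_rest P hyS hu hut ht2
  -- first component comparison
  have h1 : (T.filter fun a => ({a} : Finset α) ∉ (move P hyS hu hut ht2).parts).card
      ≤ (T.filter fun a => ({a} : Finset α) ∉ P.parts).card := by
    apply card_le_card
    intro a haf
    rw [mem_filter] at haf ⊢
    obtain ⟨ha, hQ⟩ := haf
    refine ⟨ha, fun hP => hQ ?_⟩
    rw [hQparts]
    have h1 : ({a} : Finset α) ≠ W := by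
      intro h; rw [← h, card_singleton] at hW2; omega
    have h2 : ({a} : Finset α) ≠ P.part b := by
      intro h
      have : b ∈ ({a} : Finset α) := h ▸ P.mem_part hbS
      rw [mem_singleton] at this
      subst this
      exact hbT ha
    refine mem_insert_of_mem (mem_insert_of_mem ?_)
    rw [hrest, mem_erase, mem_erase]
    exact ⟨h2, h1, hP⟩
  -- second component strictly decreases
  have h2 : ∑ V ∈ (move P hyS hu hut ht2).parts.filter (fun V => b ∉ V), (V.card - 1) + 1
      = ∑ V ∈ P.parts.filter (fun V => b ∉ V), (V.card - 1) := by
    rw [hfiltP, hfiltQ, sum_insert hWrest, sum_insert hWyrest,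
      card_erase_of_mem hy]
    omega
  rw [phi, phi]
  have := Nat.mul_le_mul_left (2 * n) h1
  omega

end Main

section Main2

lemma stepB {n : ℕ} (hn : 0 < n) {T : Finset α} {b : α} (hbS : b ∈ S) (hbT : b ∉ T)
    (hTS : T ⊆ S) (P : Finpartition S)
    (hsing : ∀ V ∈ P.parts, b ∉ V → V.card = 1)
    {a : α} (ha : a ∈ T) (hanot : ({a} : Finset α) ∉ P.parts)
    {c : α} (hc : ({c} : Finset α) ∈ P.parts) (hcT : c ∉ T) (hcb : c ≠ b) :
    ∃ Q1 Q2 : Finpartition S, Q1.parts.card = P.parts.card ∧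
      Q2.parts.card = P.parts.card ∧ adjP P Q1 ∧ adjP Q1 Q2 ∧
      phi n T b Q2 < phi n T b P := by
  have haS : a ∈ S := hTS ha
  have hcS : c ∈ S := P.le hc (mem_singleton_self c)
  have hab : a ≠ b := fun h => hbT (h ▸ ha)
  have hac : a ≠ c := fun h => hcT (h ▸ ha)
  set B := P.part a with hB
  have haB : a ∈ B := P.mem_part haS
  have hBp : B ∈ P.parts := P.part_mem.2 haS
  have hbB : b ∈ B := by
    by_contra hbB
    have h1 := hsing B hBp hbB
    obtain ⟨z, hz⟩ := card_eq_one.1 h1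
    rw [hz, mem_singleton] at haB
    rw [← haB] at hz
    exact hanot (hz ▸ hBp)
  have hpb : P.part b = B := P.part_eq_of_mem hBp hbB
  -- first move : `a` into `{c}`
  have hut1 : ({c} : Finset α) ≠ P.part a := by
    rw [← hB]; intro h
    have : b ∈ ({c} : Finset α) := h ▸ hbB
    exact hcb (mem_singleton.1 this).symm
  have ht21 : ((P.part a).erase a).Nonempty :=
    ⟨b, mem_erase.2 ⟨fun h => hab h.symm, hbB⟩⟩
  set Q1 := move P haS hc hut1 ht21 with hQ1
  set rest1 := (P.parts.erase B).erase {c} with hrest1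
  have hrest_mem : ∀ V ∈ rest1, V ∈ P.parts ∧ V ≠ B ∧ V ≠ ({c} : Finset α) := by
    intro V hV
    simp only [hrest1, mem_erase] at hV
    exact ⟨hV.2.2, hV.2.1, hV.1⟩
  have hrest_b : ∀ V ∈ rest1, b ∉ V := by
    intro V hV hbV
    obtain ⟨hVp, hVB, -⟩ := hrest_mem V hV
    exact hVB (P.eq_of_mem_parts hVp hBp hbV hbB)
  have hrest_a : ∀ V ∈ rest1, a ∉ V := by
    intro V hV haV
    obtain ⟨hVp, hVB, -⟩ := hrest_mem V hV
    exact hVB (P.eq_of_mem_parts hVp hBp haV haB)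
  have hQ1parts : Q1.parts = insert (insert a {c}) (insert (B.erase a) rest1) := by
    rw [hQ1, show (move P haS hc hut1 ht21).parts = moveParts P a {c} from rfl, moveParts, ← hB]
  -- second move : `c` into `B.erase a`
  have hcQ1 : c ∈ insert a ({c} : Finset α) := mem_insert_of_mem (mem_singleton_self c)
  have hXQ1 : insert a ({c} : Finset α) ∈ Q1.parts := by rw [hQ1parts]; exact mem_insert_self _ _
  have hQ1partc : Q1.part c = insert a {c} := Q1.part_eq_of_mem hXQ1 hcQ1
  have hYQ1 : B.erase a ∈ Q1.parts := by rw [hQ1parts]; exact mem_insert_of_mem (mem_insert_self _ _)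
  have hbY : b ∈ B.erase a := mem_erase.2 ⟨fun h => hab h.symm, hbB⟩
  have hut2 : B.erase a ≠ Q1.part c := by
    rw [hQ1partc]; intro h
    have : b ∈ insert a ({c} : Finset α) := h ▸ hbY
    rcases mem_insert.1 this with h' | h'
    · exact hab h'.symm
    · exact hcb (mem_singleton.1 h').symm
  have ht22 : ((Q1.part c).erase c).Nonempty := by
    rw [hQ1partc]
    exact ⟨a, mem_erase.2 ⟨hac, mem_insert_self a _⟩⟩
  set Q2 := move Q1 hcS hYQ1 hut2 ht22 with hQ2
  have hXne : insert a ({c} : Finset α) ∉ insert (B.erase a) rest1 := by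
    simp only [mem_insert]
    push_neg
    constructor
    · intro h
      have : a ∈ B.erase a := h ▸ mem_insert_self a _
      exact notMem_erase a B this
    · intro h
      exact hrest_a _ h (mem_insert_self a _)
  have hYne : B.erase a ∉ rest1 := fun h => hrest_b _ h hbY
  have herase : (insert a ({c} : Finset α)).erase c = {a} := by
    ext z
    simp only [mem_erase, mem_insert, mem_singleton]
    constructor
    · rintro ⟨hzc, rfl | rfl⟩
      · rfl
      · exact absurd rfl hzc
    · rintro rfl
      exact ⟨hac, Or.inl rfl⟩
  have hQ2parts : Q2.parts = insert (insert c (B.erase a)) (insert ({a} : Finset α) rest1) := by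
    rw [hQ2, show (move Q1 hcS hYQ1 hut2 ht22).parts = moveParts Q1 c (B.erase a) from rfl,
      moveParts, hQ1partc, herase, hQ1parts, erase_insert hXne, erase_insert hYne]
  refine ⟨Q1, Q2, move_card P haS hc hut1 ht21, ?_,
    move_adjP P haS hc hut1 ht21, move_adjP Q1 hcS hYQ1 hut2 ht22, ?_⟩
  · have h1 : Q2.parts.card = Q1.parts.card := move_card Q1 hcS hYQ1 hut2 ht22
    have h2 : Q1.parts.card = P.parts.card := move_card P haS hc hut1 ht21
    rw [h1, h2]
  -- now the potential comparison
  have hPparts : P.parts = insert B (insert {c} rest1) := parts_eq_insert P hBp hc hut1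
  have hcrest : ({c} : Finset α) ∉ rest1 := by
    simp [hrest1]
  have harest : ({a} : Finset α) ∉ rest1 := fun h => hanot (hrest_mem _ h).1
  have hfiltP : P.parts.filter (fun V => b ∉ V) = insert {c} rest1 := by
    rw [hPparts, filter_insert, filter_insert, if_neg (by simp [hbB]),
      if_pos (by simp [Ne.symm hcb]), filter_eq_self.2 hrest_b]
  have hfiltQ2 : Q2.parts.filter (fun V => b ∉ V) = insert {a} rest1 := by
    rw [hQ2parts, filter_insert, filter_insert,
      if_neg (by simp only [not_not]; exact mem_insert_of_mem hbY),
      if_pos (by simp [Ne.symm hab]), filter_eq_self.2 hrest_b]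
  have hsum : ∑ V ∈ Q2.parts.filter (fun V => b ∉ V), (V.card - 1)
      = ∑ V ∈ P.parts.filter (fun V => b ∉ V), (V.card - 1) := by
    rw [hfiltP, hfiltQ2, sum_insert hcrest, sum_insert harest, card_singleton, card_singleton]
  -- first component
  have hfilt1 : T.filter (fun t => ({t} : Finset α) ∉ Q2.parts)
      = (T.filter fun t => ({t} : Finset α) ∉ P.parts).erase a := by
    ext t
    simp only [mem_erase, mem_filter]
    constructor
    · intro ⟨htT, htQ⟩
      have hta : t ≠ a := by
        rintro rfl
        exact htQ (by rw [hQ2parts]; exact mem_insert_of_mem (mem_insert_self _ _))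
      refine ⟨hta, htT, fun htP => htQ ?_⟩
      rw [hQ2parts]
      have h1 : ({t} : Finset α) ≠ B := by
        intro h
        have : b ∈ ({t} : Finset α) := h ▸ hbB
        exact hbT ((mem_singleton.1 this) ▸ htT)
      have h2 : ({t} : Finset α) ≠ ({c} : Finset α) := by
        intro h
        exact hcT ((singleton_injective h) ▸ htT)
      refine mem_insert_of_mem (mem_insert_of_mem ?_)
      rw [hrest1, mem_erase, mem_erase]
      exact ⟨h2, h1, htP⟩
    · intro ⟨hta, htT, htP⟩
      refine ⟨htT, fun htQ => ?_⟩
      rw [hQ2parts] at htQ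
      rcases mem_insert.1 htQ with h | h
      · have : b ∈ ({t} : Finset α) := h.symm ▸ mem_insert_of_mem hbY
        exact hbT ((mem_singleton.1 this) ▸ htT)
      rcases mem_insert.1 h with h' | h'
      · exact hta (singleton_injective h')
      · exact htP (hrest_mem _ h').1
  have hamem : a ∈ T.filter fun t => ({t} : Finset α) ∉ P.parts := mem_filter.2 ⟨ha, hanot⟩
  have hcard1 : (T.filter (fun t => ({t} : Finset α) ∉ Q2.parts)).card + 1
      = (T.filter fun t => ({t} : Finset α) ∉ P.parts).card := by
    rw [hfilt1, card_erase_of_mem hamem]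
    have : 0 < (T.filter fun t => ({t} : Finset α) ∉ P.parts).card :=
      card_pos.2 ⟨a, hamem⟩
    omega
  rw [phi, phi, hsum]
  have : 2 * n * ((T.filter (fun t => ({t} : Finset α) ∉ Q2.parts)).card + 1)
      = 2 * n * (T.filter fun t => ({t} : Finset α) ∉ P.parts).card := by rw [hcard1]
  nlinarith [hn]

end Main2

section Final

lemma terminal_eq {r : ℕ} {T : Finset α} {b : α} (hTS : T ⊆ S) (hT : T.card = r - 1)
    (hr : 0 < r) (hb : b ∈ S \ T) (P : Finpartition S) (hc : P.parts.card = r)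
    (hsing : ∀ V ∈ P.parts, b ∉ V → V.card = 1)
    (hall : ∀ a ∈ T, ({a} : Finset α) ∈ P.parts) :
    P.parts = canonParts S T := by
  have hbS : b ∈ S := (mem_sdiff.1 hb).1
  have hbT : b ∉ T := (mem_sdiff.1 hb).2
  set B := P.part b with hB
  have hbB : b ∈ B := P.mem_part hbS
  have hBp : B ∈ P.parts := P.part_mem.2 hbS
  have hBnotim : B ∉ T.image (fun a => ({a} : Finset α)) := by
    intro h
    obtain ⟨a, ha, h⟩ := mem_image.1 h
    rw [← h] at hbB
    exact hbT ((mem_singleton.1 hbB) ▸ ha)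
  have hsub : insert B (T.image fun a => ({a} : Finset α)) ⊆ P.parts := by
    intro V hV
    rcases mem_insert.1 hV with rfl | hV
    · exact hBp
    · obtain ⟨a, ha, rfl⟩ := mem_image.1 hV
      exact hall a ha
  have hcard : P.parts.card ≤ (insert B (T.image fun a => ({a} : Finset α))).card := by
    rw [card_insert_of_notMem hBnotim, card_image_of_injective _ singleton_injective, hT, hc]
    omega
  have heq : insert B (T.image fun a => ({a} : Finset α)) = P.parts :=
    eq_of_subset_of_card_le hsub hcard
  -- now show B = S \ T
  have hTB : ∀ a ∈ T, a ∉ B := by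
    intro a ha haB
    have h1 : ({a} : Finset α) ∈ P.parts := hall a ha
    have := P.eq_of_mem_parts hBp h1 haB (mem_singleton_self a)
    rw [this] at hbB
    exact hbT ((mem_singleton.1 hbB) ▸ ha)
  have hBeq : B = S \ T := by
    ext z
    rw [mem_sdiff]
    constructor
    · intro hz
      refine ⟨P.le hBp hz, fun hzT => hTB z hzT hz⟩
    · rintro ⟨hzS, hzT⟩
      obtain ⟨V, hV, hzV⟩ := P.exists_mem hzS
      rw [← heq, mem_insert] at hV
      rcases hV with rfl | hV
      · exact hzV
      · obtain ⟨a, ha, rfl⟩ := mem_image.1 hV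
        exact absurd ((mem_singleton.1 hzV) ▸ ha) hzT
  rw [← heq, hBeq, canonParts]

lemma reach_canon {r n : ℕ} (hn : S.card = n) (hr : 0 < r) (hnr : r ≤ n)
    {T : Finset α} (hTS : T ⊆ S) (hT : T.card = r - 1) {b : α} (hb : b ∈ S \ T)
    (C : Finpartition S) (hCp : C.parts = canonParts S T) (hcC : C.parts.card = r) :
    ∀ k (P : Finpartition S) (hc : P.parts.card = r), phi n T b P = k →
      (partitionGraph S r).Reachable ⟨P, hc⟩ ⟨C, hcC⟩ := by
  have hbS : b ∈ S := (mem_sdiff.1 hb).1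
  have hbT : b ∉ T := (mem_sdiff.1 hb).2
  have hn0 : 0 < n := lt_of_lt_of_le hr hnr
  intro k
  induction k using Nat.strong_induction_on with
  | _ k IH =>
  intro P hc hphi
  by_cases hA : ∃ W ∈ P.parts, b ∉ W ∧ 2 ≤ W.card
  · obtain ⟨W, hW, hbW, hW2⟩ := hA
    obtain ⟨y, hy⟩ := P.nonempty_of_mem_parts hW
    obtain ⟨Q, hQcard, hadj, hlt⟩ := stepA (n := n) (T := T) hbS hbT P hW hbW hW2 hy
    exact ((adjP_adj hadj hc (hQcard.trans hc)).reachable).trans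
      (IH (phi n T b Q) (hphi ▸ hlt) Q (hQcard.trans hc) rfl)
  · push_neg at hA
    have hsing : ∀ V ∈ P.parts, b ∉ V → V.card = 1 := by
      intro V hV hbV
      have h1 := hA V hV hbV
      have h2 := card_pos.2 (P.nonempty_of_mem_parts hV)
      omega
    by_cases hall : ∀ a ∈ T, ({a} : Finset α) ∈ P.parts
    · have : P.parts = C.parts := by
        rw [hCp]
        exact terminal_eq hTS hT hr hb P hc hsing hall
      have : (⟨P, hc⟩ : {P : Finpartition S // P.parts.card = r}) = ⟨C, hcC⟩ :=
        Subtype.ext (Finpartition.ext this)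
      rw [this]
    · push_neg at hall
      obtain ⟨a, ha, hanot⟩ := hall
      -- find a singleton part `{c}` with `c ∉ T`
      have hr2 : 2 ≤ r := by
        have : 1 ≤ T.card := card_pos.2 ⟨a, ha⟩
        omega
      have hfe : P.parts.filter (fun V => b ∉ V) = P.parts.erase (P.part b) := by
        ext V
        simp only [mem_filter, mem_erase]
        constructor
        · rintro ⟨hV, hbV⟩
          exact ⟨fun h => hbV (h ▸ P.mem_part hbS), hV⟩
        · rintro ⟨hne, hV⟩
          exact ⟨hV, fun hbV => hne (P.eq_of_mem_parts hV (P.part_mem.2 hbS) hbV (P.mem_part hbS))⟩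
      have hfcard : (P.parts.filter (fun V => b ∉ V)).card = r - 1 := by
        rw [hfe, card_erase_of_mem (P.part_mem.2 hbS), hc]
      have hnotsub : ¬ (P.parts.filter (fun V => b ∉ V) ⊆
          (T.erase a).image fun t => ({t} : Finset α)) := by
        intro hsub
        have := card_le_card hsub
        rw [hfcard, card_image_of_injective _ singleton_injective,
          card_erase_of_mem ha, hT] at this
        omega
      obtain ⟨V, hVf, hVnot⟩ := not_subset.1 hnotsub
      rw [mem_filter] at hVf
      obtain ⟨hVp, hbV⟩ := hVf
      obtain ⟨c, hVc⟩ := card_eq_one.1 (hsing V hVp hbV)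
      subst hVc
      have hcb : c ≠ b := fun h => hbV (h ▸ mem_singleton_self c)
      have hcT : c ∉ T := by
        intro hcT
        by_cases hca : c = a
        · exact hanot (hca ▸ hVp)
        · exact hVnot (mem_image.2 ⟨c, mem_erase.2 ⟨hca, hcT⟩, rfl⟩)
      obtain ⟨Q1, Q2, hc1, hc2, hadj1, hadj2, hlt⟩ :=
        stepB hn0 hbS hbT hTS P hsing ha hanot hVp hcT hcb
      exact ((adjP_adj hadj1 hc (hc1.trans hc)).reachable).trans
        (((adjP_adj hadj2 (hc1.trans hc) (hc2.trans hc)).reachable).trans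
          (IH (phi n T b Q2) (hphi ▸ hlt) Q2 (hc2.trans hc) rfl))

end Final


end Aux

/-- If `S` has `n ≥ r` elements, the `r`-partition graph `G[S,r]` is connected. -/
theorem partitionGraph_connected {α : Type*} [DecidableEq α] (S : Finset α) (n r : ℕ)
    (hn : S.card = n) (hr : 0 < r) (hnr : r ≤ n) :
    (partitionGraph S r).Connected := by
  obtain ⟨T, hTS, hT⟩ := exists_subset_card_eq (show r - 1 ≤ S.card by omega)
  have hRne : (S \ T).Nonempty := by
    rw [← card_pos, card_sdiff_of_subset hTS, hT, hn]; omega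
  obtain ⟨b, hb⟩ := id hRne
  obtain ⟨C, hCp⟩ := canon_finpartition hTS hRne
  have hcC : C.parts.card = r := by
    rw [hCp, canonParts_card hTS hRne, hT]; omega
  have hne : Nonempty {P : Finpartition S // P.parts.card = r} := ⟨⟨C, hcC⟩⟩
  rw [SimpleGraph.connected_iff]
  refine ⟨?_, hne⟩
  intro u v
  obtain ⟨P, hcP⟩ := u
  obtain ⟨Q, hcQ⟩ := v
  exact (reach_canon hn hr hnr hTS hT hb C hCp hcC _ P hcP rfl).trans
    (reach_canon hn hr hnr hTS hT hb C hCp hcC _ Q hcQ rfl).symm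
end

section
/- Let S be a finite set with n elements and let r be a positive integer with r ≤ n/2. Then the number of edges of the r-partition graph G[S,r] satisfies |E(G[S,r])| = (1/2) · Σ_{k=0}^{r-1} C(n,k) · S₂(n - k, r - k) · (n - k)(r - 1), where C(n,k) is the binomial coefficient and S₂(x,y) denotes the number of partitions of a set of x elements into exactly y parts each of cardinality at least 2. -/
open Finset

set_option linter.unusedSectionVars false
set_option linter.unusedVariables false

namespace PG

variable {α : Type*} [DecidableEq α] {S : Finset α}

lemma part_subset (P : Finpartition S) {t : Finset α} (ht : t ∈ P.parts) : t ⊆ S := P.le ht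

lemma not_mem_of_ne_part (P : Finpartition S) {x : α} {t : Finset α} (ht : t ∈ P.parts)
    (hne : t ≠ P.part x) : x ∉ t := fun hxt => hne (P.part_eq_of_mem ht hxt).symm

lemma erase_eq_self_of_ne_part (P : Finpartition S) {x : α} {t : Finset α} (ht : t ∈ P.parts)
    (hne : t ≠ P.part x) : t.erase x = t :=
  Finset.erase_eq_of_notMem (not_mem_of_ne_part P ht hne)

lemma part_erase_not_mem (P : Finpartition S) {x : α} (hx : x ∈ S) :
    (P.part x).erase x ∉ P.parts := by
  intro h
  have hxe : x ∉ (P.part x).erase x := Finset.notMem_erase _ _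
  have hne : (P.part x).erase x ≠ P.part x := fun he => hxe (by rw [he]; exact P.mem_part hx)
  have hd : Disjoint ((P.part x).erase x) (P.part x) :=
    P.disjoint h ((P.part_mem.2 hx)) hne
  have : (P.part x).erase x = ∅ :=
    Finset.eq_empty_of_forall_notMem fun a ha =>
      Finset.disjoint_left.1 hd ha (Finset.mem_of_mem_erase ha)
  rw [this] at h
  exact P.bot_notMem h

lemma part_eq_singleton (P : Finpartition S) {x : α} (hx : x ∈ S)
    (h1 : (P.part x).card = 1) : P.part x = {x} := by
  obtain ⟨a, ha⟩ := Finset.card_eq_one.1 h1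
  have := P.mem_part hx
  rw [ha] at this ⊢
  rw [Finset.mem_singleton] at this
  rw [this]

lemma eraseParts_of_two_le (P : Finpartition S) {x : α} (hx : x ∈ S)
    (h2 : 2 ≤ (P.part x).card) :
    eraseParts P.parts x = insert ((P.part x).erase x) (P.parts.erase (P.part x)) := by
  ext u
  simp only [eraseParts, Finset.mem_filter, Finset.mem_image, Finset.mem_insert,
    Finset.mem_erase]
  constructor
  · rintro ⟨⟨t, ht, rfl⟩, hne⟩
    by_cases htx : t = P.part x
    · exact Or.inl (by rw [htx])
    · right
      rw [erase_eq_self_of_ne_part P ht htx]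
      exact ⟨htx, ht⟩
  · rintro (rfl | ⟨hne, hu⟩)
    · refine ⟨⟨P.part x, (P.part_mem.2 hx), rfl⟩, ?_⟩
      rw [← Finset.card_pos, Finset.card_erase_of_mem (P.mem_part hx)]
      omega
    · exact ⟨⟨u, hu, erase_eq_self_of_ne_part P hu hne⟩, P.nonempty_of_mem_parts hu⟩

lemma eraseParts_of_card_eq_one (P : Finpartition S) {x : α} (hx : x ∈ S)
    (h1 : (P.part x).card = 1) :
    eraseParts P.parts x = P.parts.erase (P.part x) := by
  have hsing := part_eq_singleton P hx h1
  ext u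
  simp only [eraseParts, Finset.mem_filter, Finset.mem_image, Finset.mem_erase]
  constructor
  · rintro ⟨⟨t, ht, rfl⟩, hne⟩
    by_cases htx : t = P.part x
    · exfalso
      rw [htx, hsing, Finset.erase_singleton] at hne
      exact Finset.not_nonempty_empty hne
    · rw [erase_eq_self_of_ne_part P ht htx]
      exact ⟨htx, ht⟩
  · rintro ⟨hne, hu⟩
    exact ⟨⟨u, hu, erase_eq_self_of_ne_part P hu hne⟩, P.nonempty_of_mem_parts hu⟩

lemma card_eraseParts_of_two_le (P : Finpartition S) {x : α} (hx : x ∈ S)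
    (h2 : 2 ≤ (P.part x).card) :
    (eraseParts P.parts x).card = P.parts.card := by
  rw [eraseParts_of_two_le P hx h2,
    Finset.card_insert_of_notMem (fun h => part_erase_not_mem P hx (Finset.mem_of_mem_erase h)),
    Finset.card_erase_of_mem ((P.part_mem.2 hx))]
  have : 0 < P.parts.card := Finset.card_pos.2 ⟨_, (P.part_mem.2 hx)⟩
  omega

lemma card_eraseParts_of_card_eq_one (P : Finpartition S) {x : α} (hx : x ∈ S)
    (h1 : (P.part x).card = 1) :
    (eraseParts P.parts x).card = P.parts.card - 1 := by
  rw [eraseParts_of_card_eq_one P hx h1, Finset.card_erase_of_mem ((P.part_mem.2 hx))]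

lemma parts_eq_of_two_le (P : Finpartition S) {x : α} (hx : x ∈ S)
    (h2 : 2 ≤ (P.part x).card) :
    P.parts = insert (P.part x) ((eraseParts P.parts x).erase ((P.part x).erase x)) := by
  rw [eraseParts_of_two_le P hx h2,
    Finset.erase_insert (fun h => part_erase_not_mem P hx (Finset.mem_of_mem_erase h)),
    Finset.insert_erase ((P.part_mem.2 hx))]

lemma parts_eq_of_card_eq_one (P : Finpartition S) {x : α} (hx : x ∈ S)
    (h1 : (P.part x).card = 1) :
    P.parts = insert {x} (eraseParts P.parts x) := by
  rw [eraseParts_of_card_eq_one P hx h1, ← part_eq_singleton P hx h1,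
    Finset.insert_erase ((P.part_mem.2 hx))]

/-- Relation transfer: if the erased partitions agree at `x`, then parts agree off `x`. -/
lemma mem_part_of_eraseParts_eq {P Q : Finpartition S} {x a b : α}
    (h : eraseParts P.parts x = eraseParts Q.parts x) (ha : a ∈ S) (hax : a ≠ x) (hbx : b ≠ x)
    (hb : b ∈ P.part a) : b ∈ Q.part a := by
  have hpa : P.part a ∈ P.parts := (P.part_mem.2 ha)
  have hmem : (P.part a).erase x ∈ eraseParts P.parts x := by
    simp only [eraseParts, Finset.mem_filter, Finset.mem_image]
    exact ⟨⟨_, hpa, rfl⟩, ⟨a, Finset.mem_erase.2 ⟨hax, P.mem_part ha⟩⟩⟩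
  rw [h] at hmem
  simp only [eraseParts, Finset.mem_filter, Finset.mem_image] at hmem
  obtain ⟨⟨t, ht, hte⟩, -⟩ := hmem
  have hat : a ∈ t := by
    have : a ∈ t.erase x := hte ▸ Finset.mem_erase.2 ⟨hax, P.mem_part ha⟩
    exact Finset.mem_of_mem_erase this
  have hbt : b ∈ t := by
    have : b ∈ t.erase x := hte ▸ Finset.mem_erase.2 ⟨hbx, hb⟩
    exact Finset.mem_of_mem_erase this
  rw [Q.part_eq_of_mem ht hat]
  exact hbt

set_option linter.unusedSectionVars false

section Move

variable (P : Finpartition S) {x : α} {T : Finset α}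

/-- The parts of the partition obtained from `P` by moving `x` into the part `T`. -/
def moveParts (P : Finpartition S) (x : α) (T : Finset α) : Finset (Finset α) :=
  insert (insert x T) (insert ((P.part x).erase x) (((P.parts.erase (P.part x))).erase T))

lemma mem_moveParts {u : Finset α} :
    u ∈ moveParts P x T ↔
      u = insert x T ∨ u = (P.part x).erase x ∨ (u ∈ P.parts ∧ u ≠ P.part x ∧ u ≠ T) := by
  simp only [moveParts, Finset.mem_insert, Finset.mem_erase]
  tauto

variable (hx : x ∈ S) (hT : T ∈ P.parts) (hxT : x ∉ T) (h2 : 2 ≤ (P.part x).card)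
include hx hT hxT

lemma T_ne_part : T ≠ P.part x := fun h => hxT (h ▸ P.mem_part hx)

lemma T_disj_part : Disjoint T (P.part x) :=
  P.disjoint hT ((P.part_mem.2 hx)) (T_ne_part P hx hT hxT)

include h2 in
lemma moveParts_subset_S {u : Finset α} (hu : u ∈ moveParts P x T) : u ⊆ S := by
  rw [mem_moveParts] at hu
  rcases hu with rfl | rfl | ⟨hu, -, -⟩
  · exact Finset.insert_subset hx (part_subset P hT)
  · exact (Finset.erase_subset _ _).trans (part_subset P ((P.part_mem.2 hx)))
  · exact part_subset P hu

include h2 in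
lemma moveParts_nonempty {u : Finset α} (hu : u ∈ moveParts P x T) : u.Nonempty := by
  rw [mem_moveParts] at hu
  rcases hu with rfl | rfl | ⟨hu, -, -⟩
  · exact Finset.insert_nonempty _ _
  · rw [← Finset.card_pos, Finset.card_erase_of_mem (P.mem_part hx)]; omega
  · exact P.nonempty_of_mem_parts hu

include h2 in
lemma moveParts_disjoint {u v : Finset α} (hu : u ∈ moveParts P x T) (hv : v ∈ moveParts P x T)
    (huv : u ≠ v) : Disjoint u v := by
  have hTd := T_disj_part P hx hT hxT
  rw [mem_moveParts] at hu hv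
  rw [Finset.disjoint_left]
  intro a hau hav
  rcases hu with rfl | rfl | ⟨hu, hu1, hu2⟩ <;> rcases hv with rfl | rfl | ⟨hv, hv1, hv2⟩
  · exact huv rfl
  · -- insert x T vs erase
    rcases Finset.mem_insert.1 hau with rfl | haT
    · exact Finset.notMem_erase _ _ hav
    · exact Finset.disjoint_left.1 hTd haT (Finset.mem_of_mem_erase hav)
  · rcases Finset.mem_insert.1 hau with rfl | haT
    · exact not_mem_of_ne_part P hv hv1 hav
    · exact Finset.disjoint_left.1 (P.disjoint hT hv (Ne.symm hv2)) haT hav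
  · rcases Finset.mem_insert.1 hav with rfl | haT
    · exact Finset.notMem_erase _ _ hau
    · exact Finset.disjoint_left.1 hTd haT (Finset.mem_of_mem_erase hau)
  · exact huv rfl
  · exact Finset.disjoint_left.1 (P.disjoint ((P.part_mem.2 hx)) hv (Ne.symm hv1))
      (Finset.mem_of_mem_erase hau) hav
  · rcases Finset.mem_insert.1 hav with rfl | haT
    · exact not_mem_of_ne_part P hu hu1 hau
    · exact Finset.disjoint_left.1 (P.disjoint hT hu (Ne.symm hu2)) haT hau
  · exact Finset.disjoint_left.1 (P.disjoint ((P.part_mem.2 hx)) hu (Ne.symm hu1))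
      (Finset.mem_of_mem_erase hav) hau
  · exact Finset.disjoint_left.1 (P.disjoint hu hv (fun h => huv h)) hau hav

include h2 in
/-- The partition obtained from `P` by moving `x` into the part `T`. -/
def move : Finpartition S where
  parts := moveParts P x T
  supIndep := by
    rw [Finset.supIndep_iff_pairwiseDisjoint]
    intro u hu v hv huv
    exact moveParts_disjoint P hx hT hxT h2 hu hv huv
  sup_parts := by
    apply Finset.Subset.antisymm
    · intro a ha
      rw [Finset.mem_sup] at ha
      obtain ⟨u, hu, hau⟩ := ha
      exact moveParts_subset_S P hx hT hxT h2 hu hau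
    · intro a haS
      rw [Finset.mem_sup]
      by_cases hax : a = x
      · exact ⟨insert x T, by simp [moveParts], by simp [hax]⟩
      by_cases haP : a ∈ P.part x
      · exact ⟨(P.part x).erase x, by simp [moveParts], Finset.mem_erase.2 ⟨hax, haP⟩⟩
      by_cases haT : a ∈ T
      · exact ⟨insert x T, by simp [moveParts], Finset.mem_insert_of_mem haT⟩
      · refine ⟨P.part a, ?_, P.mem_part haS⟩
        rw [mem_moveParts]
        refine Or.inr (Or.inr ⟨(P.part_mem.2 haS), ?_, ?_⟩)
        · exact fun h => haP (h ▸ P.mem_part haS)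
        · exact fun h => haT (h ▸ P.mem_part haS)
  bot_notMem := fun h => by
    have := moveParts_nonempty P hx hT hxT h2 h
    exact Finset.not_nonempty_empty this

lemma insert_not_mem_rest :
    insert x T ∉ insert ((P.part x).erase x) ((P.parts.erase (P.part x)).erase T) := by
  intro h
  rcases Finset.mem_insert.1 h with h' | h'
  · exact Finset.notMem_erase x _ (h' ▸ Finset.mem_insert_self x T)
  · have hmem := Finset.mem_of_mem_erase (Finset.mem_of_mem_erase h')
    have hne : insert x T ≠ P.part x := by
      have := Finset.mem_erase.1 (Finset.mem_of_mem_erase h')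
      exact this.1
    exact not_mem_of_ne_part P hmem hne (Finset.mem_insert_self x T)

include h2 in
lemma erase_part_not_mem_rest :
    (P.part x).erase x ∉ (P.parts.erase (P.part x)).erase T :=
  fun h => part_erase_not_mem P hx (Finset.mem_of_mem_erase (Finset.mem_of_mem_erase h))

include h2 in
lemma card_moveParts : (moveParts P x T).card = P.parts.card := by
  have hTmem : T ∈ P.parts.erase (P.part x) :=
    Finset.mem_erase.2 ⟨T_ne_part P hx hT hxT, hT⟩
  have h2le : 2 ≤ P.parts.card := by
    have h1 : (P.parts.erase (P.part x)).card = P.parts.card - 1 :=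
      Finset.card_erase_of_mem ((P.part_mem.2 hx))
    have : 0 < (P.parts.erase (P.part x)).card := Finset.card_pos.2 ⟨T, hTmem⟩
    have : 0 < P.parts.card := Finset.card_pos.2 ⟨T, hT⟩
    omega
  rw [moveParts, Finset.card_insert_of_notMem (insert_not_mem_rest P hx hT hxT),
    Finset.card_insert_of_notMem (erase_part_not_mem_rest P hx hT hxT h2),
    Finset.card_erase_of_mem hTmem, Finset.card_erase_of_mem ((P.part_mem.2 hx))]
  omega

include h2 in
lemma move_parts_def : (move P hx hT hxT h2).parts = moveParts P x T := rfl

include h2 in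
lemma part_move_x : (move P hx hT hxT h2).part x = insert x T := by
  refine ((move P hx hT hxT h2).part_eq_of_mem ?_ (Finset.mem_insert_self x T))
  rw [move_parts_def, mem_moveParts]
  exact Or.inl rfl

include h2 in
lemma move_ne : move P hx hT hxT h2 ≠ P := by
  intro h
  have hTm : T ∉ moveParts P x T := by
    rw [mem_moveParts]
    rintro (h' | h' | ⟨-, -, h'⟩)
    · exact hxT (h' ▸ Finset.mem_insert_self x T)
    · obtain ⟨t, ht⟩ := P.nonempty_of_mem_parts hT
      have htp : t ∈ P.part x := Finset.mem_of_mem_erase (h' ▸ ht)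
      exact Finset.disjoint_left.1 (T_disj_part P hx hT hxT) ht htp
    · exact h' rfl
  rw [← h] at hT
  exact hTm hT

include h2 in
lemma eraseParts_move : eraseParts (move P hx hT hxT h2).parts x = eraseParts P.parts x := by
  have hcard : 2 ≤ ((move P hx hT hxT h2).part x).card := by
    rw [part_move_x, Finset.card_insert_of_notMem hxT]
    have : 0 < T.card := Finset.card_pos.2 (P.nonempty_of_mem_parts hT)
    omega
  rw [eraseParts_of_two_le _ (by exact hx) hcard, part_move_x,
    Finset.erase_insert hxT, eraseParts_of_two_le P hx h2]
  have hrest : (move P hx hT hxT h2).parts.erase (insert x T) =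
      insert ((P.part x).erase x) ((P.parts.erase (P.part x)).erase T) := by
    rw [move_parts_def, moveParts, Finset.erase_insert (insert_not_mem_rest P hx hT hxT)]
  rw [hrest, Finset.insert_comm,
    Finset.insert_erase (Finset.mem_erase.2 ⟨T_ne_part P hx hT hxT, hT⟩)]

end Move

section Unique

variable (P : Finpartition S) {x : α} {T : Finset α}
variable (hx : x ∈ S) (hT : T ∈ P.parts) (hxT : x ∉ T) (h2 : 2 ≤ (P.part x).card)
include hx hT hxT h2

lemma move_unique {y : α} (hyS : y ∈ S)
    (hy : eraseParts P.parts y = eraseParts (move P hx hT hxT h2).parts y) : y = x := by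
  by_contra hyx
  have hyx' : x ≠ y := fun h => hyx h.symm
  obtain ⟨u, hu⟩ : ((P.part x).erase x).Nonempty := by
    rw [← Finset.card_pos, Finset.card_erase_of_mem (P.mem_part hx)]; omega
  have hux : u ≠ x := (Finset.mem_erase.1 hu).1
  have huP : u ∈ P.part x := Finset.mem_of_mem_erase hu
  obtain ⟨t, ht⟩ := P.nonempty_of_mem_parts hT
  have htP : t ∉ P.part x := Finset.disjoint_left.1 (T_disj_part P hx hT hxT) ht
  have hQpx : (move P hx hT hxT h2).part x = insert x T := part_move_x P hx hT hxT h2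
  by_cases hyu : y = u
  · -- use the pair (x, t)
    have hty : t ≠ y := fun h => htP (h ▸ hyu ▸ huP)
    have htQ : t ∈ (move P hx hT hxT h2).part x := by
      rw [hQpx]; exact Finset.mem_insert_of_mem ht
    have := mem_part_of_eraseParts_eq hy.symm hx hyx' hty htQ
    exact htP this
  · -- use the pair (x, u)
    have huy : u ≠ y := fun h => hyu h.symm
    have := mem_part_of_eraseParts_eq hy hx hyx' huy huP
    rw [hQpx, Finset.mem_insert] at this
    rcases this with rfl | hT'
    · exact hux rfl
    · exact Finset.disjoint_left.1 (T_disj_part P hx hT hxT) hT' huP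

end Unique

lemma eq_move_of_eraseParts_eq {P Q : Finpartition S} (hcard : P.parts.card = Q.parts.card)
    (hne : P ≠ Q) {x : α} (hx : x ∈ S)
    (h : eraseParts P.parts x = eraseParts Q.parts x) :
    ∃ (h2 : 2 ≤ (P.part x).card) (T : Finset α) (hT : T ∈ P.parts) (hxT : x ∉ T),
      Q = move P hx hT hxT h2 := by
  have hp1 : 1 ≤ (P.part x).card := Finset.card_pos.2 ⟨x, P.mem_part hx⟩
  have hq1 : 1 ≤ (Q.part x).card := Finset.card_pos.2 ⟨x, Q.mem_part hx⟩
  have hppos : 0 < P.parts.card := Finset.card_pos.2 ⟨_, (P.part_mem.2 hx)⟩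
  by_cases hP2 : 2 ≤ (P.part x).card
  · by_cases hQ2 : 2 ≤ (Q.part x).card
    · -- main case
      have hBx : x ∈ Q.part x := Q.mem_part hx
      have hBE : (Q.part x).erase x ∈ eraseParts Q.parts x := by
        rw [eraseParts_of_two_le Q hx hQ2]; exact Finset.mem_insert_self _ _
      rw [← h, eraseParts_of_two_le P hx hP2] at hBE
      rcases Finset.mem_insert.1 hBE with heq | hmem
      · exfalso
        have hBA : Q.part x = P.part x := by
          rw [← Finset.insert_erase hBx, heq, Finset.insert_erase (P.mem_part hx)]
        apply hne
        apply Finpartition.ext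
        rw [parts_eq_of_two_le P hx hP2, parts_eq_of_two_le Q hx hQ2, h, hBA]
      · refine ⟨hP2, (Q.part x).erase x, Finset.mem_of_mem_erase hmem,
          Finset.notMem_erase _ _, ?_⟩
        apply Finpartition.ext
        rw [move_parts_def, moveParts]
        rw [parts_eq_of_two_le Q hx hQ2, ← h, eraseParts_of_two_le P hx hP2]
        have hne2 : (P.part x).erase x ≠ (Q.part x).erase x := by
          intro heq2
          exact part_erase_not_mem P hx (heq2 ▸ Finset.mem_of_mem_erase hmem)
        rw [Finset.erase_insert_of_ne hne2, Finset.insert_erase hBx]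
    · exfalso
      have h1 : (Q.part x).card = 1 := by omega
      have e1 := card_eraseParts_of_two_le P hx hP2
      have e2 := card_eraseParts_of_card_eq_one Q hx h1
      rw [h] at e1
      omega
  · have h1 : (P.part x).card = 1 := by omega
    by_cases hQ2 : 2 ≤ (Q.part x).card
    · exfalso
      have e1 := card_eraseParts_of_card_eq_one P hx h1
      have e2 := card_eraseParts_of_two_le Q hx hQ2
      rw [h] at e1
      omega
    · exfalso
      have h1Q : (Q.part x).card = 1 := by omega
      apply hne
      apply Finpartition.ext
      rw [parts_eq_of_card_eq_one P hx h1, parts_eq_of_card_eq_one Q hx h1Q, h]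

end PG

namespace PG2

variable {α : Type*} [DecidableEq α] {S : Finset α}

open PG

section Degree

variable {r : ℕ}

lemma adj_move (P : Finpartition S) {x : α} {T : Finset α} (hx : x ∈ S) (hT : T ∈ P.parts)
    (hxT : x ∉ T) (h2 : 2 ≤ (P.part x).card) (hP : P.parts.card = r)
    (hQ : (move P hx hT hxT h2).parts.card = r) :
    (partitionGraph S r).Adj ⟨P, hP⟩ ⟨move P hx hT hxT h2, hQ⟩ := by
  refine ⟨fun hEq => move_ne P hx hT hxT h2 (congrArg Subtype.val hEq).symm, ?_⟩
  exact ⟨x, ⟨hx, (eraseParts_move P hx hT hxT h2).symm⟩,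
    fun y hy => move_unique P hx hT hxT h2 hy.1 hy.2⟩

/-- Pairs `(x, T)` with `x` in a non-singleton part and `T` a part not containing `x`. -/
def pairs (P : Finpartition S) : Finset (α × Finset α) :=
  (S.filter fun x => 2 ≤ (P.part x).card).biUnion fun x =>
    (P.parts.filter fun T => x ∉ T).image fun T => (x, T)

lemma mem_pairs {P : Finpartition S} {p : α × Finset α} :
    p ∈ pairs P ↔ p.1 ∈ S ∧ 2 ≤ (P.part p.1).card ∧ p.2 ∈ P.parts ∧ p.1 ∉ p.2 := by
  obtain ⟨x, T⟩ := p
  simp only [pairs, Finset.mem_biUnion, Finset.mem_image, Finset.mem_filter, Prod.mk.injEq]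
  constructor
  · rintro ⟨y, ⟨hy, h2⟩, T', ⟨hT', hxT'⟩, rfl, rfl⟩
    exact ⟨hy, h2, hT', hxT'⟩
  · rintro ⟨hy, h2, hT', hxT'⟩
    exact ⟨x, ⟨hy, h2⟩, T, ⟨hT', hxT'⟩, rfl, rfl⟩

lemma filter_mem_eq_singleton (P : Finpartition S) {x : α} (hx : x ∈ S) :
    P.parts.filter (fun T => x ∈ T) = {P.part x} := by
  ext T
  simp only [Finset.mem_filter, Finset.mem_singleton]
  constructor
  · rintro ⟨hT, hxT⟩
    exact (P.part_eq_of_mem hT hxT).symm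
  · rintro rfl
    exact ⟨(P.part_mem.2 hx), P.mem_part hx⟩

lemma card_filter_not_mem (P : Finpartition S) {x : α} (hx : x ∈ S) (hP : P.parts.card = r) :
    (P.parts.filter fun T => x ∉ T).card = r - 1 := by
  have h := Finset.card_filter_add_card_filter_not (s := P.parts)
    (p := fun T => x ∈ T)
  rw [filter_mem_eq_singleton P hx, Finset.card_singleton, hP] at h
  simpa using by omega
  
lemma card_pairs (P : Finpartition S) (hP : P.parts.card = r) :
    (pairs P).card = (S.filter fun x => 2 ≤ (P.part x).card).card * (r - 1) := by
  rw [pairs, Finset.card_biUnion]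
  · rw [Finset.sum_congr rfl (fun x hx => ?_), Finset.sum_const, smul_eq_mul]
    rw [Finset.card_image_of_injective _ (fun a b hab => congrArg Prod.snd hab),
      card_filter_not_mem P (Finset.mem_filter.1 hx).1 hP]
  · intro x hx y hy hxy
    rw [Function.onFun, Finset.disjoint_left]
    intro p hp hq
    obtain ⟨a1, -, he1⟩ := Finset.mem_image.1 hp
    obtain ⟨a2, -, he2⟩ := Finset.mem_image.1 hq
    exact hxy ((congrArg Prod.fst (he1.trans he2.symm)))

variable [DecidableRel (partitionGraph S r).Adj]

lemma card_neighborFinset_eq (v : {P : Finpartition S // P.parts.card = r}) :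
    ((partitionGraph S r).neighborFinset v).card = (pairs v.1).card := by
  refine (Finset.card_bij
    (fun p hp => (⟨move v.1 (mem_pairs.1 hp).1 (mem_pairs.1 hp).2.2.1 (mem_pairs.1 hp).2.2.2
        (mem_pairs.1 hp).2.1,
      by rw [move_parts_def, card_moveParts v.1 (mem_pairs.1 hp).1 (mem_pairs.1 hp).2.2.1
          (mem_pairs.1 hp).2.2.2 (mem_pairs.1 hp).2.1]; exact v.2⟩ :
      {P : Finpartition S // P.parts.card = r}))
    ?_ ?_ ?_).symm
  · intro p hp
    rw [SimpleGraph.mem_neighborFinset]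
    exact adj_move v.1 _ _ _ _ v.2 _
  · rintro ⟨x₁, T₁⟩ hp₁ ⟨x₂, T₂⟩ hp₂ hEq
    obtain ⟨hx₁, h2₁, hT₁, hxT₁⟩ := mem_pairs.1 hp₁
    obtain ⟨hx₂, h2₂, hT₂, hxT₂⟩ := mem_pairs.1 hp₂
    have hM : move v.1 hx₁ hT₁ hxT₁ h2₁ = move v.1 hx₂ hT₂ hxT₂ h2₂ :=
      congrArg Subtype.val hEq
    have hx12 : x₁ = x₂ := by
      apply move_unique v.1 hx₂ hT₂ hxT₂ h2₂ hx₁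
      rw [← hM]
      exact (eraseParts_move v.1 hx₁ hT₁ hxT₁ h2₁).symm
    subst hx12
    have e1 : (move v.1 hx₁ hT₁ hxT₁ h2₁).part x₁ = insert x₁ T₁ :=
      part_move_x v.1 hx₁ hT₁ hxT₁ h2₁
    have e2 : (move v.1 hx₂ hT₂ hxT₂ h2₂).part x₁ = insert x₁ T₂ :=
      part_move_x v.1 hx₂ hT₂ hxT₂ h2₂
    rw [hM, e2] at e1
    have hxT₁' : x₁ ∉ T₁ := hxT₁
    have hxT₂' : x₁ ∉ T₂ := hxT₂
    have hT12 : T₁ = T₂ := by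
      calc T₁ = (insert x₁ T₁).erase x₁ := (Finset.erase_insert hxT₁').symm
        _ = (insert x₁ T₂).erase x₁ := by rw [e1]
        _ = T₂ := Finset.erase_insert hxT₂'
    rw [hT12]
  · intro Q hQ
    rw [SimpleGraph.mem_neighborFinset] at hQ
    obtain ⟨hne, x, ⟨hx, hE⟩, -⟩ := hQ
    have hne' : v.1 ≠ Q.1 := fun h => hne (Subtype.ext h)
    obtain ⟨h2, T, hT, hxT, hQmove⟩ :=
      eq_move_of_eraseParts_eq (v.2.trans Q.2.symm) hne' hx hE
    refine ⟨(x, T), mem_pairs.2 ⟨hx, h2, hT, hxT⟩, ?_⟩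
    exact Subtype.ext hQmove.symm

lemma degree_eq (v : {P : Finpartition S // P.parts.card = r}) :
    (partitionGraph S r).degree v
      = (S.filter fun x => 2 ≤ (v.1.part x).card).card * (r - 1) := by
  rw [SimpleGraph.degree, card_neighborFinset_eq, card_pairs v.1 v.2]

end Degree

lemma card_singleton_elems (P : Finpartition S) :
    (S.filter fun x => (P.part x).card = 1).card
      = (P.parts.filter fun t => t.card = 1).card := by
  refine Finset.card_bij (fun x _ => P.part x) ?_ ?_ ?_
  · intro x hx
    obtain ⟨hxS, h1⟩ := Finset.mem_filter.1 hx
    exact Finset.mem_filter.2 ⟨(P.part_mem.2 hxS), h1⟩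
  · intro x hx y hy hEq
    obtain ⟨hxS, h1x⟩ := Finset.mem_filter.1 hx
    obtain ⟨hyS, h1y⟩ := Finset.mem_filter.1 hy
    have hEq' : P.part x = P.part y := hEq
    have ex := part_eq_singleton P hxS h1x
    have ey := part_eq_singleton P hyS h1y
    rw [ex, ey] at hEq'
    exact Finset.singleton_injective hEq'
  · intro t ht
    obtain ⟨htP, h1⟩ := Finset.mem_filter.1 ht
    obtain ⟨a, rfl⟩ := Finset.card_eq_one.1 h1
    have haS : a ∈ S := part_subset P htP (Finset.mem_singleton_self a)
    have hpa : P.part a = {a} := P.part_eq_of_mem htP (Finset.mem_singleton_self a)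
    exact ⟨a, Finset.mem_filter.2 ⟨haS, by rw [hpa]; rfl⟩, hpa⟩

lemma card_filter_two_le (P : Finpartition S) :
    (S.filter fun x => 2 ≤ (P.part x).card).card
      = S.card - (P.parts.filter fun t => t.card = 1).card := by
  have hsplit := Finset.card_filter_add_card_filter_not (s := S)
    (p := fun x => 2 ≤ (P.part x).card)
  have hone : S.filter (fun x => ¬ 2 ≤ (P.part x).card)
      = S.filter (fun x => (P.part x).card = 1) := by
    apply Finset.filter_congr
    intro x hx
    have : 1 ≤ (P.part x).card := Finset.card_pos.2 ⟨x, P.mem_part hx⟩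
    constructor
    · intro h; simp only [not_le] at h; omega
    · intro h; simp only [not_le]; omega
  rw [hone, card_singleton_elems P] at hsplit
  omega

section Extend

variable {A : Finset α}

/-- Extend a partition of `S \ A` by adding the elements of `A` as singleton parts. -/
def extendSingles (hA : A ⊆ S) (Q : Finpartition (S \ A)) : Finpartition S where
  parts := Q.parts ∪ A.image ({·})
  supIndep := by
    rw [Finset.supIndep_iff_pairwiseDisjoint]
    intro u hu v hv huv
    change Disjoint u v
    rw [Finset.mem_coe, Finset.mem_union] at hu hv
    have hQsub : ∀ t ∈ Q.parts, t ⊆ S \ A := fun t ht => Q.le ht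
    rcases hu with hu | hu <;> rcases hv with hv | hv
    · exact Q.disjoint hu hv huv
    · obtain ⟨a, haA, rfl⟩ := Finset.mem_image.1 hv
      rw [Finset.disjoint_singleton_right]
      intro hau
      exact (Finset.mem_sdiff.1 (hQsub u hu hau)).2 haA
    · obtain ⟨a, haA, rfl⟩ := Finset.mem_image.1 hu
      rw [Finset.disjoint_singleton_left]
      intro hav
      exact (Finset.mem_sdiff.1 (hQsub v hv hav)).2 haA
    · obtain ⟨a, haA, rfl⟩ := Finset.mem_image.1 hu
      obtain ⟨b, hbA, rfl⟩ := Finset.mem_image.1 hv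
      rw [Finset.disjoint_singleton_right, Finset.mem_singleton]
      exact fun h => huv (by rw [h])
  sup_parts := by
    rw [Finset.sup_union, Q.sup_parts]
    have himg : (A.image ({·} : α → Finset α)).sup id = A := by
      apply Finset.Subset.antisymm
      · intro b hb
        rw [Finset.mem_sup] at hb
        obtain ⟨u, hu, hbu⟩ := hb
        obtain ⟨a, haA, rfl⟩ := Finset.mem_image.1 hu
        have hbu' : b ∈ ({a} : Finset α) := hbu
        rw [Finset.mem_singleton] at hbu'
        exact hbu' ▸ haA
      · intro a ha
        rw [Finset.mem_sup]
        exact ⟨{a}, Finset.mem_image_of_mem _ ha, Finset.mem_singleton_self a⟩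
    rw [himg, Finset.sup_eq_union, Finset.sdiff_union_of_subset hA]
  bot_notMem := by
    rw [Finset.mem_union]
    rintro (h | h)
    · exact Q.bot_notMem h
    · obtain ⟨a, -, ha⟩ := Finset.mem_image.1 h
      exact Finset.singleton_ne_empty a ha

variable (hA : A ⊆ S)

lemma singleton_not_mem_parts (Q : Finpartition (S \ A)) {a : α} (ha : a ∈ A) :
    {a} ∉ Q.parts := fun h =>
  (Finset.mem_sdiff.1 (Q.le h (Finset.mem_singleton_self a))).2 ha

lemma parts_disjoint_image (Q : Finpartition (S \ A)) :
    Disjoint Q.parts (A.image ({·} : α → Finset α)) := by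
  rw [Finset.disjoint_left]
  intro t ht hti
  obtain ⟨a, haA, rfl⟩ := Finset.mem_image.1 hti
  exact singleton_not_mem_parts Q haA ht

lemma card_extendSingles (Q : Finpartition (S \ A)) :
    (extendSingles hA Q).parts.card = Q.parts.card + A.card := by
  show (Q.parts ∪ A.image ({·})).card = _
  rw [Finset.card_union_of_disjoint (parts_disjoint_image Q),
    Finset.card_image_of_injective _ Finset.singleton_injective]

lemma part_extendSingles_of_mem (Q : Finpartition (S \ A)) {a : α} (ha : a ∈ A) :
    (extendSingles hA Q).part a = {a} :=
  (extendSingles hA Q).part_eq_of_mem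
    (Finset.mem_union_right _ (Finset.mem_image_of_mem _ ha)) (Finset.mem_singleton_self a)

lemma part_extendSingles_of_not_mem (Q : Finpartition (S \ A)) {x : α} (hx : x ∈ S \ A) :
    (extendSingles hA Q).part x = Q.part x :=
  (extendSingles hA Q).part_eq_of_mem (Finset.mem_union_left _ ((Q.part_mem.2 hx))) (Q.mem_part hx)

lemma singles_extendSingles (Q : Finpartition (S \ A))
    (hQ2 : ∀ t ∈ Q.parts, 2 ≤ t.card) :
    S.filter (fun x => ((extendSingles hA Q).part x).card = 1) = A := by
  ext x
  rw [Finset.mem_filter]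
  constructor
  · rintro ⟨hxS, h1⟩
    by_contra hxA
    have hx' : x ∈ S \ A := Finset.mem_sdiff.2 ⟨hxS, hxA⟩
    rw [part_extendSingles_of_not_mem hA Q hx'] at h1
    have := hQ2 _ ((Q.part_mem.2 hx'))
    omega
  · intro hxA
    refine ⟨hA hxA, ?_⟩
    rw [part_extendSingles_of_mem hA Q hxA]
    exact Finset.card_singleton x

lemma extendSingles_parts_filter (Q : Finpartition (S \ A))
    (hQ2 : ∀ t ∈ Q.parts, 2 ≤ t.card) :
    (extendSingles hA Q).parts.filter (fun t => 2 ≤ t.card) = Q.parts := by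
  show (Q.parts ∪ A.image ({·})).filter _ = _
  rw [Finset.filter_union, Finset.filter_true_of_mem hQ2, Finset.filter_false_of_mem, 
    Finset.union_empty]
  intro t ht
  obtain ⟨a, -, rfl⟩ := Finset.mem_image.1 ht
  simp

lemma extendSingles_injective {Q Q' : Finpartition (S \ A)}
    (hQ2 : ∀ t ∈ Q.parts, 2 ≤ t.card) (hQ2' : ∀ t ∈ Q'.parts, 2 ≤ t.card)
    (h : extendSingles hA Q = extendSingles hA Q') : Q = Q' := by
  apply Finpartition.ext
  rw [← extendSingles_parts_filter hA Q hQ2, ← extendSingles_parts_filter hA Q' hQ2', h]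

/-- Restrict a partition of `S` whose singleton-set is `A` to a partition of `S \ A`. -/
def restrictTo (P : Finpartition S)
    (hAs : S.filter (fun x => (P.part x).card = 1) = A) : Finpartition (S \ A) :=
  P.ofSubset (Finset.filter_subset (fun t => 2 ≤ t.card) P.parts) (by
    apply Finset.Subset.antisymm
    · intro b hb
      rw [Finset.mem_sup] at hb
      obtain ⟨t, ht, hbt⟩ := hb
      obtain ⟨htP, h2t⟩ := Finset.mem_filter.1 ht
      have hbS : b ∈ S := P.le htP hbt
      refine Finset.mem_sdiff.2 ⟨hbS, fun hbA => ?_⟩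
      rw [← hAs, Finset.mem_filter] at hbA
      rw [P.part_eq_of_mem htP hbt] at hbA
      omega
    · intro b hb
      obtain ⟨hbS, hbA⟩ := Finset.mem_sdiff.1 hb
      rw [Finset.mem_sup]
      have h1 : 1 ≤ (P.part b).card := Finset.card_pos.2 ⟨b, P.mem_part hbS⟩
      have hne1 : (P.part b).card ≠ 1 := fun h => hbA (by
        rw [← hAs, Finset.mem_filter]; exact ⟨hbS, h⟩)
      exact ⟨P.part b, Finset.mem_filter.2 ⟨(P.part_mem.2 hbS), by omega⟩, P.mem_part hbS⟩)

lemma restrictTo_parts (P : Finpartition S)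
    (hAs : S.filter (fun x => (P.part x).card = 1) = A) :
    (restrictTo P hAs).parts = P.parts.filter (fun t => 2 ≤ t.card) := rfl

lemma restrictTo_two_le (P : Finpartition S)
    (hAs : S.filter (fun x => (P.part x).card = 1) = A) :
    ∀ t ∈ (restrictTo P hAs).parts, 2 ≤ t.card := by
  intro t ht
  exact (Finset.mem_filter.1 ht).2

lemma extendSingles_restrictTo (P : Finpartition S)
    (hAs : S.filter (fun x => (P.part x).card = 1) = A) :
    extendSingles hA (restrictTo P hAs) = P := by
  apply Finpartition.ext
  show (restrictTo P hAs).parts ∪ A.image ({·}) = P.parts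
  rw [restrictTo_parts]
  apply Finset.Subset.antisymm
  · intro t ht
    rcases Finset.mem_union.1 ht with ht' | ht'
    · exact (Finset.mem_filter.1 ht').1
    · obtain ⟨a, haA, rfl⟩ := Finset.mem_image.1 ht'
      rw [← hAs, Finset.mem_filter] at haA
      rw [← part_eq_singleton P haA.1 haA.2]
      exact (P.part_mem.2 haA.1)
  · intro t ht
    rw [Finset.mem_union]
    have h1 : 1 ≤ t.card := Finset.card_pos.2 (P.nonempty_of_mem_parts ht)
    by_cases h2 : 2 ≤ t.card
    · exact Or.inl (Finset.mem_filter.2 ⟨ht, h2⟩)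
    · right
      have hc1 : t.card = 1 := by omega
      obtain ⟨a, rfl⟩ := Finset.card_eq_one.1 hc1
      have haS : a ∈ S := P.le ht (Finset.mem_singleton_self a)
      have hpa : P.part a = {a} := P.part_eq_of_mem ht (Finset.mem_singleton_self a)
      have haA : a ∈ A := by
        rw [← hAs, Finset.mem_filter]
        exact ⟨haS, by rw [hpa]; exact Finset.card_singleton a⟩
      exact Finset.mem_image_of_mem _ haA

lemma card_restrictTo {r : ℕ} (P : Finpartition S) (hP : P.parts.card = r)
    (hAs : S.filter (fun x => (P.part x).card = 1) = A) :
    (restrictTo P hAs).parts.card = r - A.card := by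
  have hsplit := Finset.card_filter_add_card_filter_not (s := P.parts)
    (p := fun t => 2 ≤ t.card)
  have hone : P.parts.filter (fun t => ¬ 2 ≤ t.card) = P.parts.filter (fun t => t.card = 1) := by
    apply Finset.filter_congr
    intro t ht
    have : 1 ≤ t.card := Finset.card_pos.2 (P.nonempty_of_mem_parts ht)
    constructor
    · intro h; simp only [not_le] at h; omega
    · intro h; simp only [not_le]; omega
  rw [hone] at hsplit
  have hAcard : A.card = (P.parts.filter fun t => t.card = 1).card := by
    rw [← hAs, card_singleton_elems P]
  rw [restrictTo_parts]
  omega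

include hA in
/-- The number of partitions of `S` with `r` parts whose singleton-set is exactly `A` equals
the number of partitions of `S \ A` into `r - |A|` parts each of size at least 2. -/
lemma card_fiber_eq (r : ℕ) (hAr : A.card ≤ r) :
    (Finset.univ.filter fun v : {P : Finpartition S // P.parts.card = r} =>
       S.filter (fun x => (v.1.part x).card = 1) = A).card
    = (Finset.univ.filter fun Q : Finpartition (S \ A) =>
       Q.parts.card = r - A.card ∧ ∀ t ∈ Q.parts, 2 ≤ t.card).card := by
  refine (Finset.card_bij (fun Q hQ => (⟨extendSingles hA Q, by
      rw [card_extendSingles hA Q, ((Finset.mem_filter.1 hQ).2).1]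
      omega⟩ : {P : Finpartition S // P.parts.card = r})) ?_ ?_ ?_).symm
  · intro Q hQ
    rw [Finset.mem_filter]
    exact ⟨Finset.mem_univ _, singles_extendSingles hA Q ((Finset.mem_filter.1 hQ).2).2⟩
  · intro Q₁ hQ₁ Q₂ hQ₂ hEq
    exact extendSingles_injective hA ((Finset.mem_filter.1 hQ₁).2).2
      ((Finset.mem_filter.1 hQ₂).2).2 (congrArg Subtype.val hEq)
  · intro v hv
    have hAs := (Finset.mem_filter.1 hv).2
    refine ⟨restrictTo v.1 hAs, Finset.mem_filter.2 ⟨Finset.mem_univ _,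
      card_restrictTo v.1 v.2 hAs, restrictTo_two_le v.1 hAs⟩, ?_⟩
    exact Subtype.ext (extendSingles_restrictTo hA v.1 hAs)

end Extend

section Transport

variable {β : Type*} [DecidableEq β]

lemma image_eq_image_of_subset {f : α → β} {s : Finset α} (hf : Set.InjOn f s)
    {t u : Finset α} (ht : t ⊆ s) (hu : u ⊆ s) (h : t.image f = u.image f) : t = u := by
  ext a
  constructor
  · intro hat
    have : f a ∈ u.image f := h ▸ Finset.mem_image_of_mem f hat
    obtain ⟨a', ha'u, ha'⟩ := Finset.mem_image.1 this
    rwa [← hf (hu ha'u) (ht hat) ha']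
  · intro hau
    have : f a ∈ t.image f := h.symm ▸ Finset.mem_image_of_mem f hau
    obtain ⟨a', ha't, ha'⟩ := Finset.mem_image.1 this
    rwa [← hf (ht ha't) (hu hau) ha']

/-- Push a finpartition forward along a map injective on the base set. -/
def fpMap (f : α → β) {s : Finset α} (hf : Set.InjOn f s) (P : Finpartition s) :
    Finpartition (s.image f) where
  parts := P.parts.image (Finset.image f)
  supIndep := by
    rw [Finset.supIndep_iff_pairwiseDisjoint]
    intro u hu v hv huv
    change Disjoint u v
    rw [Finset.mem_coe] at hu hv
    obtain ⟨t, ht, rfl⟩ := Finset.mem_image.1 hu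
    obtain ⟨t', ht', rfl⟩ := Finset.mem_image.1 hv
    rw [Finset.disjoint_left]
    intro b hb hb'
    obtain ⟨a, hat, rfl⟩ := Finset.mem_image.1 hb
    obtain ⟨a', ha't', ha'⟩ := Finset.mem_image.1 hb'
    have haa : a' = a := hf (P.le ht' ha't') (P.le ht hat) ha'
    have : t = t' := P.eq_of_mem_parts ht ht' hat (haa ▸ ha't')
    exact huv (by rw [this])
  sup_parts := by
    apply Finset.Subset.antisymm
    · intro b hb
      rw [Finset.mem_sup] at hb
      obtain ⟨u, hu, hbu⟩ := hb
      obtain ⟨t, ht, rfl⟩ := Finset.mem_image.1 hu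
      obtain ⟨a, hat, rfl⟩ := Finset.mem_image.1 hbu
      exact Finset.mem_image_of_mem f (P.le ht hat)
    · intro b hb
      obtain ⟨a, haS, rfl⟩ := Finset.mem_image.1 hb
      rw [Finset.mem_sup]
      exact ⟨(P.part a).image f, Finset.mem_image_of_mem _ ((P.part_mem.2 haS)),
        Finset.mem_image_of_mem f (P.mem_part haS)⟩
  bot_notMem := by
    intro h
    obtain ⟨t, ht, hte⟩ := Finset.mem_image.1 h
    have hte' : t.image f = ∅ := hte
    rw [Finset.image_eq_empty] at hte'
    rw [hte'] at ht
    exact P.bot_notMem ht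

lemma fpMap_parts (f : α → β) {s : Finset α} (hf : Set.InjOn f s) (P : Finpartition s) :
    (fpMap f hf P).parts = P.parts.image (Finset.image f) := rfl

lemma card_fpMap_parts (f : α → β) {s : Finset α} (hf : Set.InjOn f s) (P : Finpartition s) :
    (fpMap f hf P).parts.card = P.parts.card := by
  rw [fpMap_parts]
  apply Finset.card_image_of_injOn
  intro t ht u hu h
  exact image_eq_image_of_subset hf (P.le ht) (P.le hu) h

lemma card_image_part (f : α → β) {s : Finset α} (hf : Set.InjOn f s) {t : Finset α}
    (ht : t ⊆ s) : (t.image f).card = t.card :=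
  Finset.card_image_of_injOn (hf.mono (Finset.coe_subset.2 ht))

lemma fpMap_injective (f : α → β) {s : Finset α} (hf : Set.InjOn f s)
    {P P' : Finpartition s} (h : fpMap f hf P = fpMap f hf P') : P = P' := by
  have hparts : P.parts.image (Finset.image f) = P'.parts.image (Finset.image f) :=
    congrArg Finpartition.parts h
  apply Finpartition.ext
  ext t
  constructor
  · intro ht
    have : t.image f ∈ P'.parts.image (Finset.image f) :=
      hparts ▸ Finset.mem_image_of_mem _ ht
    obtain ⟨u, hu, huf⟩ := Finset.mem_image.1 this
    rwa [image_eq_image_of_subset hf (P.le ht) (P'.le hu) huf.symm]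
  · intro ht
    have : t.image f ∈ P.parts.image (Finset.image f) :=
      hparts.symm ▸ Finset.mem_image_of_mem _ ht
    obtain ⟨u, hu, huf⟩ := Finset.mem_image.1 this
    rwa [image_eq_image_of_subset hf (P'.le ht) (P.le hu) huf.symm]

lemma image_filter_eq (f : α → β) {s : Finset α} (Q : Finpartition (s.image f))
    {u : Finset β} (hu : u ∈ Q.parts) :
    (s.filter fun a => f a ∈ u).image f = u := by
  apply Finset.Subset.antisymm
  · intro b hb
    obtain ⟨a, ha, rfl⟩ := Finset.mem_image.1 hb
    exact (Finset.mem_filter.1 ha).2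
  · intro b hb
    have hbs : b ∈ s.image f := Q.le hu hb
    obtain ⟨a, haS, rfl⟩ := Finset.mem_image.1 hbs
    exact Finset.mem_image_of_mem f (Finset.mem_filter.2 ⟨haS, hb⟩)

/-- Pull a finpartition of `s.image f` back to a finpartition of `s`. -/
def fpPull (f : α → β) (s : Finset α) (Q : Finpartition (s.image f)) : Finpartition s where
  parts := Q.parts.image fun u => s.filter fun a => f a ∈ u
  supIndep := by
    rw [Finset.supIndep_iff_pairwiseDisjoint]
    intro u hu v hv huv
    change Disjoint u v
    rw [Finset.mem_coe] at hu hv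
    obtain ⟨w, hw, rfl⟩ := Finset.mem_image.1 hu
    obtain ⟨w', hw', rfl⟩ := Finset.mem_image.1 hv
    rw [Finset.disjoint_left]
    intro a ha ha'
    have h1 := (Finset.mem_filter.1 ha).2
    have h2 := (Finset.mem_filter.1 ha').2
    have : w = w' := Q.eq_of_mem_parts hw hw' h1 h2
    exact huv (by rw [this])
  sup_parts := by
    apply Finset.Subset.antisymm
    · intro a ha
      rw [Finset.mem_sup] at ha
      obtain ⟨u, hu, hau⟩ := ha
      obtain ⟨w, hw, rfl⟩ := Finset.mem_image.1 hu
      exact (Finset.mem_filter.1 hau).1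
    · intro a ha
      rw [Finset.mem_sup]
      have hfa : f a ∈ s.image f := Finset.mem_image_of_mem f ha
      refine ⟨s.filter fun b => f b ∈ Q.part (f a),
        Finset.mem_image_of_mem _ ((Q.part_mem.2 hfa)),
        Finset.mem_filter.2 ⟨ha, Q.mem_part hfa⟩⟩
  bot_notMem := by
    intro h
    obtain ⟨u, hu, hue⟩ := Finset.mem_image.1 h
    obtain ⟨b, hb⟩ := Q.nonempty_of_mem_parts hu
    have hbs : b ∈ s.image f := Q.le hu hb
    obtain ⟨a, haS, rfl⟩ := Finset.mem_image.1 hbs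
    have : a ∈ s.filter fun a => f a ∈ u := Finset.mem_filter.2 ⟨haS, hb⟩
    rw [hue] at this
    exact Finset.notMem_empty a this

lemma fpMap_fpPull (f : α → β) {s : Finset α} (hf : Set.InjOn f s)
    (Q : Finpartition (s.image f)) : fpMap f hf (fpPull f s Q) = Q := by
  apply Finpartition.ext
  rw [fpMap_parts]
  show (Q.parts.image fun u => s.filter fun a => f a ∈ u).image (Finset.image f) = Q.parts
  rw [Finset.image_image]
  rw [show ((Finset.image f) ∘ fun u => s.filter fun a => f a ∈ u)
      = fun u => (s.filter fun a => f a ∈ u).image f from rfl]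
  calc Q.parts.image (fun u => (s.filter fun a => f a ∈ u).image f)
      = Q.parts.image id := Finset.image_congr (fun u hu => image_filter_eq f Q hu)
    _ = Q.parts := Finset.image_id

lemma card_pred_eq (f : α → β) {s : Finset α} (hf : Set.InjOn f s) (y : ℕ) :
    (Finset.univ.filter fun P : Finpartition s =>
        P.parts.card = y ∧ ∀ t ∈ P.parts, 2 ≤ t.card).card
      = (Finset.univ.filter fun Q : Finpartition (s.image f) =>
        Q.parts.card = y ∧ ∀ t ∈ Q.parts, 2 ≤ t.card).card := by
  refine Finset.card_bij (fun P _ => fpMap f hf P) ?_ ?_ ?_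
  · intro P hP
    obtain ⟨-, hcard, h2⟩ := Finset.mem_filter.1 hP
    refine Finset.mem_filter.2 ⟨Finset.mem_univ _, ?_, ?_⟩
    · rw [card_fpMap_parts, hcard]
    · intro t ht
      rw [fpMap_parts] at ht
      obtain ⟨u, hu, rfl⟩ := Finset.mem_image.1 ht
      rw [card_image_part f hf (P.le hu)]
      exact h2 u hu
  · intro P hP P' hP' h
    exact fpMap_injective f hf h
  · intro Q hQ
    obtain ⟨-, hcard, h2⟩ := Finset.mem_filter.1 hQ
    refine ⟨fpPull f s Q, ?_, fpMap_fpPull f hf Q⟩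
    refine Finset.mem_filter.2 ⟨Finset.mem_univ _, ?_, ?_⟩
    · rw [← card_fpMap_parts f hf (fpPull f s Q), fpMap_fpPull f hf Q, hcard]
    · intro t ht
      have himg : t.image f ∈ Q.parts := by
        rw [← fpMap_fpPull f hf Q, fpMap_parts]
        exact Finset.mem_image_of_mem _ ht
      have := h2 _ himg
      rwa [card_image_part f hf ((fpPull f s Q).le ht)] at this

lemma count_congr {s t : Finset β} (h : s = t) (y : ℕ) :
    (Finset.univ.filter fun P : Finpartition s =>
        P.parts.card = y ∧ ∀ u ∈ P.parts, 2 ≤ u.card).card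
      = (Finset.univ.filter fun P : Finpartition t =>
        P.parts.card = y ∧ ∀ u ∈ P.parts, 2 ≤ u.card).card := by
  subst h; rfl

end Transport

end PG2

/-- The 2-associated Stirling number of the second kind `S₂(x,y)`: the number of
partitions of a set of `x` elements into exactly `y` parts, each of cardinality at
least `2`. -/
noncomputable def assocStirling2 (x y : ℕ) : ℕ :=
  {P : Finpartition (Finset.range x) |
    P.parts.card = y ∧ ∀ t ∈ P.parts, 2 ≤ t.card}.ncard

namespace PG3

open PG PG2

variable {α : Type*} [DecidableEq α] {S : Finset α}

lemma assocStirling2_eq_card (m y : ℕ) :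
    assocStirling2 m y = (Finset.univ.filter fun P : Finpartition (Finset.range m) =>
      P.parts.card = y ∧ ∀ t ∈ P.parts, 2 ≤ t.card).card := by
  rw [assocStirling2, ← Set.ncard_coe_finset]
  congr 1
  ext P
  simp [Set.mem_setOf_eq]

lemma count_eq_assocStirling (s : Finset α) {m : ℕ} (hm : s.card = m) (y : ℕ) :
    (Finset.univ.filter fun P : Finpartition s =>
      P.parts.card = y ∧ ∀ t ∈ P.parts, 2 ≤ t.card).card = assocStirling2 m y := by
  have hcards : s.card = (Finset.range m).card := by rw [hm, Finset.card_range]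
  let e := Finset.equivOfCardEq hcards
  let f : α → ℕ := fun a => if h : a ∈ s then (e ⟨a, h⟩ : ℕ) else 0
  have hf : Set.InjOn f s := by
    intro a ha b hb hab
    have ha' : a ∈ s := ha
    have hb' : b ∈ s := hb
    have hab' : ((e ⟨a, ha'⟩ : {x // x ∈ Finset.range m}) : ℕ)
        = ((e ⟨b, hb'⟩ : {x // x ∈ Finset.range m}) : ℕ) := by
      simpa [f, dif_pos ha', dif_pos hb'] using hab
    have := e.injective (Subtype.ext hab')
    exact congrArg Subtype.val this
  have himg : s.image f = Finset.range m := by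
    apply Finset.eq_of_subset_of_card_le
    · intro b hb
      obtain ⟨a, ha, rfl⟩ := Finset.mem_image.1 hb
      simp only [f, dif_pos ha]
      exact (e ⟨a, ha⟩).2
    · rw [Finset.card_range, Finset.card_image_of_injOn hf, hm]
  rw [card_pred_eq f hf y, count_congr himg y, ← assocStirling2_eq_card]

end PG3

/-- Edge count of the `r`-partition graph: if `r ≤ n/2` then
`|E(G[S,r])| = (1/2) Σ_{k=0}^{r-1} C(n,k) S₂(n-k, r-k) (n-k)(r-1)`. -/
theorem partitionGraph_edge_count {α : Type*} [DecidableEq α] (S : Finset α) (n r : ℕ)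
    (hn : S.card = n) (hr : 0 < r) (hrn : 2 * r ≤ n) :
    ((partitionGraph S r).edgeSet.ncard : ℝ) =
      (1 / 2) * ∑ k ∈ Finset.range r,
        (n.choose k : ℝ) * (assocStirling2 (n - k) (r - k) : ℝ) *
          ((n - k : ℕ) : ℝ) * ((r - 1 : ℕ) : ℝ) := by
  classical
  subst hn
  have hns : (partitionGraph S r).edgeSet.ncard = (partitionGraph S r).edgeFinset.card := by
    rw [← Set.ncard_coe_finset, SimpleGraph.coe_edgeFinset]
  have hhs := (partitionGraph S r).sum_degrees_eq_twice_card_edges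
  have hdeg : ∀ v : {P : Finpartition S // P.parts.card = r},
      (partitionGraph S r).degree v
      = (S.card - (S.filter fun x => (v.1.part x).card = 1).card) * (r - 1) := by
    intro v
    rw [PG2.degree_eq v, PG2.card_filter_two_le v.1, ← PG2.card_singleton_elems v.1]
  have hklt : ∀ v : {P : Finpartition S // P.parts.card = r},
      (S.filter fun x => (v.1.part x).card = 1).card < r := by
    intro v
    rw [PG2.card_singleton_elems v.1]
    by_contra hle
    push_neg at hle
    have hsub : v.1.parts.filter (fun t => t.card = 1) ⊆ v.1.parts := Finset.filter_subset _ _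
    have hcle : v.1.parts.card ≤ (v.1.parts.filter fun t => t.card = 1).card := by
      rw [v.2]; exact hle
    have heq : v.1.parts.filter (fun t => t.card = 1) = v.1.parts :=
      Finset.eq_of_subset_of_card_le hsub hcle
    have hall : ∀ t ∈ v.1.parts, t.card = 1 := by
      intro t ht
      rw [← heq] at ht
      exact (Finset.mem_filter.1 ht).2
    have hsum := v.1.sum_card_parts
    rw [Finset.sum_congr rfl hall, Finset.sum_const, smul_eq_mul, mul_one, v.2] at hsum
    omega
  -- fiberwise sum over the number of singletons
  have hfib := Finset.sum_fiberwise_of_maps_to (s := Finset.univ)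
    (g := fun v : {P : Finpartition S // P.parts.card = r} =>
      (S.filter fun x => (v.1.part x).card = 1).card)
    (t := Finset.range r)
    (fun v _ => Finset.mem_range.2 (hklt v)) (fun v => (partitionGraph S r).degree v)
  -- fiber cardinalities
  have hfibcard : ∀ j ∈ Finset.range r,
      (Finset.univ.filter fun v : {P : Finpartition S // P.parts.card = r} =>
        (S.filter fun x => (v.1.part x).card = 1).card = j).card
      = S.card.choose j * assocStirling2 (S.card - j) (r - j) := by
    intro j hj
    have hjr : j < r := Finset.mem_range.1 hj
    have hmaps : ∀ v ∈ (Finset.univ.filter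
        fun v : {P : Finpartition S // P.parts.card = r} =>
          (S.filter fun x => (v.1.part x).card = 1).card = j),
        S.filter (fun x => (v.1.part x).card = 1) ∈ S.powersetCard j := by
      intro v hv
      exact Finset.mem_powersetCard.2 ⟨Finset.filter_subset _ _, (Finset.mem_filter.1 hv).2⟩
    rw [Finset.card_eq_sum_card_fiberwise hmaps]
    have hfibA : ∀ A ∈ S.powersetCard j,
        ((Finset.univ.filter fun v : {P : Finpartition S // P.parts.card = r} =>
            (S.filter fun x => (v.1.part x).card = 1).card = j).filter
          (fun v => S.filter (fun x => (v.1.part x).card = 1) = A)).card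
        = assocStirling2 (S.card - j) (r - j) := by
      intro A hA
      obtain ⟨hAS, hAj⟩ := Finset.mem_powersetCard.1 hA
      have hfilter : ((Finset.univ.filter fun v : {P : Finpartition S // P.parts.card = r} =>
            (S.filter fun x => (v.1.part x).card = 1).card = j).filter
          (fun v => S.filter (fun x => (v.1.part x).card = 1) = A))
          = Finset.univ.filter (fun v : {P : Finpartition S // P.parts.card = r} =>
            S.filter (fun x => (v.1.part x).card = 1) = A) := by
        ext v
        simp only [Finset.mem_filter, Finset.mem_univ, true_and]
        constructor
        · rintro ⟨-, h⟩; exact h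
        · intro h
          refine ⟨?_, h⟩
          rw [h, hAj]
      rw [hfilter, PG2.card_fiber_eq hAS r (by rw [hAj]; exact le_of_lt hjr),
        PG3.count_eq_assocStirling (S \ A) (by rw [Finset.card_sdiff_of_subset hAS, hAj]) (r - A.card),
        hAj]
    rw [Finset.sum_congr rfl hfibA, Finset.sum_const, smul_eq_mul,
      Finset.card_powersetCard]
  -- assemble the ℕ identity
  have h2E : 2 * (partitionGraph S r).edgeFinset.card
      = ∑ k ∈ Finset.range r,
        S.card.choose k * assocStirling2 (S.card - k) (r - k) * (S.card - k) * (r - 1) := by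
    rw [← hhs, ← hfib]
    apply Finset.sum_congr rfl
    intro j hj
    have : ∀ v ∈ (Finset.univ.filter
        fun v : {P : Finpartition S // P.parts.card = r} =>
          (S.filter fun x => (v.1.part x).card = 1).card = j),
        (partitionGraph S r).degree v = (S.card - j) * (r - 1) := by
      intro v hv
      rw [hdeg v, (Finset.mem_filter.1 hv).2]
    rw [Finset.sum_congr rfl this, Finset.sum_const, smul_eq_mul, hfibcard j hj]
    ring
  rw [hns]
  have hcast : ((partitionGraph S r).edgeFinset.card : ℝ)
      = (1/2 : ℝ) * ((2 * (partitionGraph S r).edgeFinset.card : ℕ) : ℝ) := by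
    push_cast; ring
  rw [hcast, h2E]
  congr 1
  push_cast
  rfl
end

section
/- Let S be a finite set with an even number n ≥ 2 of elements. Then the 2-partition graph G[S,2] is bipartite; in fact, every edge of G[S,2] joins a partition both of whose parts have odd cardinality to a partition both of whose parts have even cardinality. -/
open Finset

lemma erasePartsPair {α : Type*} [DecidableEq α] {A B : Finset α} {x : α}
    (hxB : x ∉ B) (hB : B.Nonempty) :
    eraseParts {A, B} x =
      if (A.erase x).Nonempty then {A.erase x, B} else {B} := by
  unfold eraseParts
  rw [image_insert, image_singleton, erase_eq_of_notMem hxB]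
  split_ifs with h
  · rw [filter_insert, if_pos h, filter_singleton, if_pos hB]
  · rw [filter_insert, if_neg h, filter_singleton, if_pos hB]

lemma corePair {α : Type*} [DecidableEq α] {A B C D : Finset α} {x : α}
    (hAB : Disjoint A B) (hCD : Disjoint C D)
    (hA : A.Nonempty) (hB : B.Nonempty) (hC : C.Nonempty) (hD : D.Nonempty)
    (hxA : x ∈ A) (hxC : x ∈ C)
    (hne : ({A, B} : Finset (Finset α)) ≠ {C, D})
    (h : eraseParts {A, B} x = eraseParts {C, D} x) :
    A.erase x = D ∧ B = C.erase x := by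
  have hxB : x ∉ B := disjoint_left.mp hAB hxA
  have hxD : x ∉ D := disjoint_left.mp hCD hxC
  rw [erasePartsPair hxB hB, erasePartsPair hxD hD] at h
  by_cases hAe : (A.erase x).Nonempty <;> by_cases hCe : (C.erase x).Nonempty
  · rw [if_pos hAe, if_pos hCe] at h
    have h1 : A.erase x ∈ ({C.erase x, D} : Finset (Finset α)) := h ▸ mem_insert_self _ _
    have h2 : B ∈ ({C.erase x, D} : Finset (Finset α)) :=
      h ▸ mem_insert_of_mem (mem_singleton_self _)
    rcases mem_insert.mp h1 with h1 | h1
    · -- A.erase x = C.erase x, so A = C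
      have hAC : A = C := by
        rw [← insert_erase hxA, h1, insert_erase hxC]
      rcases mem_insert.mp h2 with h2 | h2
      · -- B = C.erase x ⊆ C = A, contradiction with disjointness
        exfalso
        obtain ⟨y, hy⟩ := hB
        have hyA : y ∈ A := hAC ▸ (erase_subset x C (h2 ▸ hy))
        exact disjoint_left.mp hAB hyA hy
      · rw [mem_singleton] at h2
        exact absurd (by rw [hAC, h2]) hne
    · rw [mem_singleton] at h1
      rcases mem_insert.mp h2 with h2 | h2
      · exact ⟨h1, h2⟩
      · rw [mem_singleton] at h2
        exfalso
        obtain ⟨y, hy⟩ := hAe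
        have hyA : y ∈ A := erase_subset x A hy
        have hyB : y ∈ B := by rw [h2, ← h1]; exact hy
        exact disjoint_left.mp hAB hyA hyB
  · -- C.erase x empty: RHS = {D}
    rw [if_pos hAe, if_neg hCe] at h
    exfalso
    have h1 : A.erase x = D := by
      have := h ▸ mem_insert_self (A.erase x) ({B} : Finset (Finset α))
      simpa using this
    have h2 : B = D := by
      have := h ▸ mem_insert_of_mem (mem_singleton_self B)
      simpa using this
    obtain ⟨y, hy⟩ := hAe
    exact disjoint_left.mp hAB (erase_subset x A hy) (by rw [h2, ← h1]; exact hy)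
  · rw [if_neg hAe, if_pos hCe] at h
    exfalso
    have h1 : C.erase x = B := by
      have hm : C.erase x ∈ ({B} : Finset (Finset α)) := h.symm ▸ mem_insert_self _ _
      simpa using hm
    have h2 : D = B := by
      have hm : D ∈ ({B} : Finset (Finset α)) := h.symm ▸ mem_insert_of_mem (mem_singleton_self _)
      simpa using hm
    obtain ⟨y, hy⟩ := hD
    have hyC : y ∈ C := erase_subset x C (by rw [h1, ← h2]; exact hy)
    exact disjoint_left.mp hCD hyC hy
  · rw [if_neg hAe, if_neg hCe] at h
    exfalso
    have hBD : B = D := by simpa using h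
    have hAx : A = {x} := by
      rw [not_nonempty_iff_eq_empty] at hAe
      rcases (erase_eq_empty_iff A x).mp hAe with h' | h'
      · exact absurd h' (Finset.nonempty_iff_ne_empty.mp hA)
      · exact h'
    have hCx : C = {x} := by
      rw [not_nonempty_iff_eq_empty] at hCe
      rcases (erase_eq_empty_iff C x).mp hCe with h' | h'
      · exact absurd h' (Finset.nonempty_iff_ne_empty.mp hC)
      · exact h'
    exact hne (by rw [hAx, hBD, hCx])

lemma parityCore {α : Type*} [DecidableEq α] {A B C D : Finset α} {x : α}
    (hAB : Disjoint A B) (hCD : Disjoint C D)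
    (hA : A.Nonempty) (hB : B.Nonempty) (hC : C.Nonempty) (hD : D.Nonempty)
    (hxA : x ∈ A) (hxC : x ∈ C)
    (hne : ({A, B} : Finset (Finset α)) ≠ {C, D})
    (h : eraseParts {A, B} x = eraseParts {C, D} x)
    (hev : Even (A.card + B.card)) :
    ((Odd A.card ∧ Odd B.card) ∧ (Even C.card ∧ Even D.card)) ∨
      ((Even A.card ∧ Even B.card) ∧ (Odd C.card ∧ Odd D.card)) := by
  obtain ⟨h1, h2⟩ := corePair hAB hCD hA hB hC hD hxA hxC hne h
  have e1 : D.card + 1 = A.card := by rw [← h1, card_erase_add_one hxA]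
  have e2 : B.card + 1 = C.card := by rw [h2, card_erase_add_one hxC]
  simp only [Nat.even_iff, Nat.odd_iff] at hev ⊢
  omega

lemma partsTwo {α : Type*} [DecidableEq α] {S : Finset α} (P : Finpartition S)
    (hP : P.parts.card = 2) :
    ∃ A B, A ≠ B ∧ P.parts = {A, B} ∧ Disjoint A B ∧ A ∪ B = S ∧
      A.Nonempty ∧ B.Nonempty := by
  obtain ⟨A, B, hAB, hparts⟩ := card_eq_two.mp hP
  have hAmem : A ∈ P.parts := by rw [hparts]; exact mem_insert_self _ _
  have hBmem : B ∈ P.parts := by rw [hparts]; exact mem_insert_of_mem (mem_singleton_self _)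
  refine ⟨A, B, hAB, hparts, ?_, ?_, ?_, ?_⟩
  · exact P.disjoint hAmem hBmem hAB
  · have := P.sup_parts
    rw [hparts, sup_insert, sup_singleton, id_eq, id_eq, sup_eq_union] at this
    exact this
  · exact P.nonempty_of_mem_parts hAmem
  · exact P.nonempty_of_mem_parts hBmem

lemma mainAux {α : Type*} [DecidableEq α] {S : Finset α} (hev : Even S.card)
    {P Q : Finpartition S} (hP : P.parts.card = 2) (hQ : Q.parts.card = 2)
    (hne : P ≠ Q) {x : α} (hx : x ∈ S)
    (h : eraseParts P.parts x = eraseParts Q.parts x) :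
    ((∀ t ∈ P.parts, Odd t.card) ∧ ∀ t ∈ Q.parts, Even t.card) ∨
      ((∀ t ∈ P.parts, Even t.card) ∧ ∀ t ∈ Q.parts, Odd t.card) := by
  obtain ⟨A, B, hABne, hPp, hABd, hABu, hAn, hBn⟩ := partsTwo P hP
  obtain ⟨C, D, hCDne, hQp, hCDd, hCDu, hCn, hDn⟩ := partsTwo Q hQ
  have hne' : ({A, B} : Finset (Finset α)) ≠ {C, D} := by
    rw [← hPp, ← hQp]
    exact fun hh => hne (Finpartition.ext hh)
  rw [hPp, hQp] at h
  have hev' : Even (A.card + B.card) := by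
    rwa [← card_union_of_disjoint hABd, hABu]
  have hev'' : Even (B.card + A.card) := by rwa [Nat.add_comm]
  have hxAB : x ∈ A ∨ x ∈ B := by rw [← mem_union, hABu]; exact hx
  have hxCD : x ∈ C ∨ x ∈ D := by rw [← mem_union, hCDu]; exact hx
  have key : ((Odd A.card ∧ Odd B.card) ∧ (Even C.card ∧ Even D.card)) ∨
      ((Even A.card ∧ Even B.card) ∧ (Odd C.card ∧ Odd D.card)) := by
    rcases hxAB with hxA | hxB <;> rcases hxCD with hxC | hxD
    · exact parityCore hABd hCDd hAn hBn hCn hDn hxA hxC hne' h hev'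
    · have hne'' : ({A, B} : Finset (Finset α)) ≠ {D, C} := by
        rw [pair_comm D C]; exact hne'
      have h'' : eraseParts {A, B} x = eraseParts {D, C} x := by
        rw [pair_comm D C]; exact h
      have := parityCore hABd hCDd.symm hAn hBn hDn hCn hxA hxD hne'' h'' hev'
      tauto
    · have hne'' : ({B, A} : Finset (Finset α)) ≠ {C, D} := by
        rw [pair_comm B A]; exact hne'
      have h'' : eraseParts {B, A} x = eraseParts {C, D} x := by
        rw [pair_comm B A]; exact h
      have := parityCore hABd.symm hCDd hBn hAn hCn hDn hxB hxC hne'' h'' hev''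
      tauto
    · have hne'' : ({B, A} : Finset (Finset α)) ≠ {D, C} := by
        rw [pair_comm B A, pair_comm D C]; exact hne'
      have h'' : eraseParts {B, A} x = eraseParts {D, C} x := by
        rw [pair_comm B A, pair_comm D C]; exact h
      have := parityCore hABd.symm hCDd.symm hBn hAn hDn hCn hxB hxD hne'' h'' hev''
      tauto
  have pairAll : ∀ (p : Finset α → Prop) (U V : Finset α), p U → p V →
      ∀ t ∈ ({U, V} : Finset (Finset α)), p t := by
    intro p U V hU hV t ht
    rcases mem_insert.mp ht with h' | h'
    · subst h'; exact hU
    · rw [mem_singleton] at h'; subst h'; exact hV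
  rw [hPp, hQp]
  rcases key with ⟨⟨hA1, hB1⟩, hC1, hD1⟩ | ⟨⟨hA1, hB1⟩, hC1, hD1⟩
  · exact Or.inl ⟨pairAll _ A B hA1 hB1, pairAll _ C D hC1 hD1⟩
  · exact Or.inr ⟨pairAll _ A B hA1 hB1, pairAll _ C D hC1 hD1⟩

/-- For a set `S` of even cardinality `n ≥ 2`, the `2`-partition graph `G[S,2]` is
bipartite: it is 2-colorable and, in fact, every edge joins a partition both of whose
parts have odd cardinality to a partition both of whose parts have even cardinality. -/
theorem partitionGraph_two_bipartite {α : Type*} [DecidableEq α] (S : Finset α) (n : ℕ)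
    (hn : S.card = n) (h2 : 2 ≤ n) (hev : Even n) :
    (partitionGraph S 2).Colorable 2 ∧
      ∀ P Q, (partitionGraph S 2).Adj P Q →
        ((∀ t ∈ P.1.parts, Odd t.card) ∧ ∀ t ∈ Q.1.parts, Even t.card) ∨
          ((∀ t ∈ P.1.parts, Even t.card) ∧ ∀ t ∈ Q.1.parts, Odd t.card) := by
  subst hn
  have edge : ∀ P Q, (partitionGraph S 2).Adj P Q →
      ((∀ t ∈ P.1.parts, Odd t.card) ∧ ∀ t ∈ Q.1.parts, Even t.card) ∨
        ((∀ t ∈ P.1.parts, Even t.card) ∧ ∀ t ∈ Q.1.parts, Odd t.card) := by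
    intro P Q hadj
    have hadj' : P ≠ Q ∧ ∃! x, x ∈ S ∧
        eraseParts P.1.parts x = eraseParts Q.1.parts x := hadj
    obtain ⟨hne, x, ⟨hx, hex⟩, -⟩ := hadj'
    exact mainAux hev P.2 Q.2 (fun hh => hne (Subtype.ext hh)) hx hex
  refine ⟨?_, edge⟩
  classical
  refine ⟨⟨fun P => if ∀ t ∈ P.1.parts, Odd t.card then 0 else 1, ?_⟩⟩
  intro P Q hadj
  have hPn : P.1.parts.Nonempty := card_pos.mp (by rw [P.2]; norm_num)
  have hQn : Q.1.parts.Nonempty := card_pos.mp (by rw [Q.2]; norm_num)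
  rcases edge P Q hadj with ⟨h1, h2'⟩ | ⟨h1, h2'⟩
  · obtain ⟨t, ht⟩ := hQn
    have hq : ¬ ∀ t ∈ Q.1.parts, Odd t.card :=
      fun hh => (Nat.not_odd_iff_even.mpr (h2' t ht)) (hh t ht)
    simp only [if_pos h1, if_neg hq]
    decide
  · obtain ⟨t, ht⟩ := hPn
    have hp : ¬ ∀ t ∈ P.1.parts, Odd t.card :=
      fun hh => (Nat.not_odd_iff_even.mpr (h1 t ht)) (hh t ht)
    simp only [if_neg hp, if_pos h2']
    decide
end
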